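/- arXiv:1407.5552 — 9 statements merged into one kernel-verified Lean document; each statement's English description precedes it below -/
import Mathlib

section
/- For every positive integer n, the number q(n) of partitions of n into odd parts satisfies q(n) ≤ F_n, where F_n is the n-th Fibonacci number. -/
open Multiset Nat Nat.Partition

namespace QAux

lemma card_le_sum {s : Multiset ℕ} (hpos : ∀ i ∈ s, 0 < i) : s.card ≤ s.sum := by
  have := Multiset.card_nsmul_le_sum (s := s) (a := 1) (fun x hx => hpos x hx)
  simpa using this

lemma sum_one {s : Multiset ℕ} (hpos : ∀ i ∈ s, 0 < i) (hs : s.sum = 1) : s = {1} := by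
  have hc : s.card ≤ 1 := hs ▸ card_le_sum hpos
  interval_cases h : s.card
  · rw [Multiset.card_eq_zero] at h; simp [h] at hs
  · obtain ⟨a, ha⟩ := Multiset.card_eq_one.mp h
    subst ha; simp_all

lemma sum_two {s : Multiset ℕ} (hpos : ∀ i ∈ s, 0 < i) (hodd : ∀ i ∈ s, ¬ Even i)
    (hs : s.sum = 2) : s = {1, 1} := by
  have hc : s.card ≤ 2 := hs ▸ card_le_sum hpos
  interval_cases h : s.card
  · rw [Multiset.card_eq_zero] at h; simp [h] at hs
  · obtain ⟨a, ha⟩ := Multiset.card_eq_one.mp h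
    subst ha
    simp only [Multiset.sum_singleton] at hs
    subst hs
    exact absurd even_two (hodd 2 (Multiset.mem_singleton_self 2))
  · obtain ⟨a, b, ha⟩ := Multiset.card_eq_two.mp h
    subst ha
    have hsum : a + b = 2 := by simpa using hs
    have ha' : 0 < a := hpos a (by simp)
    have hb' : 0 < b := hpos b (by simp)
    have : a = 1 ∧ b = 1 := by omega
    simp [this.1, this.2]


lemma mem_odds_iff {n : ℕ} {p : Nat.Partition n} :
    p ∈ odds n ↔ ∀ i ∈ p.parts, ¬ Even i := by
  simp [odds, restricted]

instance instNonemptyPartition (n : ℕ) : Nonempty (Nat.Partition n) :=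
  ⟨Nat.Partition.indiscrete n⟩

lemma toFinset_nonempty {m : ℕ} (p : Nat.Partition (m + 1)) : p.parts.toFinset.Nonempty := by
  rw [Finset.nonempty_iff_ne_empty]
  intro h
  rw [Multiset.toFinset_eq_empty] at h
  have := p.parts_sum
  simp [h] at this

/-- the minimum part -/
def mp {m : ℕ} (p : Nat.Partition (m + 1)) : ℕ :=
  p.parts.toFinset.min' (toFinset_nonempty p)

lemma mp_mem {m : ℕ} (p : Nat.Partition (m + 1)) : mp p ∈ p.parts :=
  Multiset.mem_toFinset.mp (Finset.min'_mem _ _)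

lemma mp_le {m : ℕ} (p : Nat.Partition (m + 1)) {x : ℕ} (hx : x ∈ p.parts) : mp p ≤ x :=
  Finset.min'_le _ _ (Multiset.mem_toFinset.mpr hx)

lemma mp_three {m : ℕ} (p : Nat.Partition (m + 1)) (h1 : (1:ℕ) ∉ p.parts)
    (hodd : ∀ i ∈ p.parts, ¬ Even i) : 3 ≤ mp p := by
  have h1' : mp p ≠ 1 := by
    intro he
    have hm := mp_mem p
    rw [he] at hm
    exact h1 hm
  have h2 : ¬ Even (mp p) := hodd _ (mp_mem p)
  have h0 : 0 < mp p := p.parts_pos (mp_mem p)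
  rcases Nat.even_or_odd (mp p) with he | ho
  · exact absurd he h2
  · obtain ⟨k, hk⟩ := ho; omega

section key
variable (n : ℕ)

/-- erase a part 1 -/
def fA (p : Nat.Partition (n + 2)) : Nat.Partition (n + 1) :=
  if h : (1 : ℕ) ∈ p.parts then
    { parts := p.parts.erase 1
      parts_pos := fun hi => p.parts_pos (Multiset.mem_of_mem_erase hi)
      parts_sum := by
        have := p.parts_sum
        rw [← Multiset.cons_erase h, Multiset.sum_cons] at this
        omega }
  else
    { parts := {n + 1}
      parts_pos := by simp
      parts_sum := by simp }

/-- subtract 2 from the minimum part (junk value if 1 is a part) -/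
noncomputable def fB (p : Nat.Partition (n + 2)) : Nat.Partition n :=
  if h : (1 : ℕ) ∈ p.parts ∨ ¬ (∀ i ∈ p.parts, ¬ Even i) then
    Classical.arbitrary _
  else
    { parts := (p.parts.erase (mp p)).cons (mp p - 2)
      parts_pos := by
        push_neg at h
        have h3 : 3 ≤ mp p := mp_three p h.1 h.2
        intro i hi
        rcases Multiset.mem_cons.mp hi with rfl | hi'
        · omega
        · exact p.parts_pos (Multiset.mem_of_mem_erase hi')
      parts_sum := by
        push_neg at h
        have h3 : 3 ≤ mp p := mp_three p h.1 h.2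
        have hsum : mp p + (p.parts.erase (mp p)).sum = n + 2 := by
          rw [← Multiset.sum_cons, Multiset.cons_erase (mp_mem p), p.parts_sum]
        rw [Multiset.sum_cons]
        omega }

end key


lemma fA_parts {n : ℕ} (p : Nat.Partition (n + 2)) (h : (1:ℕ) ∈ p.parts) :
    (fA n p).parts = p.parts.erase 1 := by
  rw [fA, dif_pos h]

lemma fB_parts {n : ℕ} (p : Nat.Partition (n + 2)) (h1 : (1:ℕ) ∉ p.parts)
    (hodd : ∀ i ∈ p.parts, ¬ Even i) :
    (fB n p).parts = (p.parts.erase (mp p)).cons (mp p - 2) := by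
  rw [fB, dif_neg (by push_neg; exact ⟨h1, hodd⟩)]

lemma cardA (n : ℕ) :
    ((odds (n+2)).filter (fun p => (1:ℕ) ∈ p.parts)).card ≤ (odds (n+1)).card := by
  apply Finset.card_le_card_of_injOn (fA n)
  · intro p hp
    rw [Finset.mem_coe, Finset.mem_filter] at hp; rw [Finset.mem_coe]
    obtain ⟨hpo, h1⟩ := hp
    rw [mem_odds_iff] at hpo ⊢
    rw [fA_parts p h1]
    intro i hi
    exact hpo i (Multiset.mem_of_mem_erase hi)
  · intro p hp r hr hpr
    rw [Finset.coe_filter, Set.mem_setOf_eq] at hp hr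
    have h1 : (fA n p).parts = (fA n r).parts := by rw [hpr]
    rw [fA_parts p hp.2, fA_parts r hr.2] at h1
    ext1
    rw [← Multiset.cons_erase hp.2, ← Multiset.cons_erase hr.2, h1]

lemma cardB (n : ℕ) :
    ((odds (n+2)).filter (fun p => (1:ℕ) ∉ p.parts)).card ≤ (odds n).card := by
  apply Finset.card_le_card_of_injOn (fB n)
  · intro p hp
    rw [Finset.mem_coe, Finset.mem_filter] at hp; rw [Finset.mem_coe]
    obtain ⟨hpo, h1⟩ := hp
    rw [mem_odds_iff] at hpo ⊢
    have h3 := mp_three p h1 hpo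
    rw [fB_parts p h1 hpo]
    intro i hi
    rcases Multiset.mem_cons.mp hi with rfl | hi'
    · intro he
      obtain ⟨k, hk⟩ := he
      exact hpo _ (mp_mem p) ⟨k + 1, by omega⟩
    · exact hpo i (Multiset.mem_of_mem_erase hi')
  · intro p hp r hr hpr
    rw [Finset.coe_filter, Set.mem_setOf_eq] at hp hr
    have hpodd := mem_odds_iff.mp hp.1
    have hrodd := mem_odds_iff.mp hr.1
    have h3p := mp_three p hp.2 hpodd
    have h3r := mp_three r hr.2 hrodd
    have h1 : (fB n p).parts = (fB n r).parts := by rw [hpr]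
    rw [fB_parts p hp.2 hpodd, fB_parts r hr.2 hrodd] at h1
    have hab : mp p = mp r := by
      have hb : mp r - 2 ∈ (p.parts.erase (mp p)).cons (mp p - 2) := by
        rw [h1]; exact Multiset.mem_cons_self _ _
      have ha : mp p - 2 ∈ (r.parts.erase (mp r)).cons (mp r - 2) := by
        rw [← h1]; exact Multiset.mem_cons_self _ _
      rcases Multiset.mem_cons.mp hb with he | hb'
      · omega
      · have h1' : mp p ≤ mp r - 2 := mp_le p (Multiset.mem_of_mem_erase hb')
        rcases Multiset.mem_cons.mp ha with he | ha'
        · omega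
        · have h2' : mp r ≤ mp p - 2 := mp_le r (Multiset.mem_of_mem_erase ha')
          omega
    rw [hab] at h1
    have h2 : p.parts.erase (mp r) = r.parts.erase (mp r) := by
      rwa [Multiset.cons_inj_right] at h1
    ext1
    rw [← Multiset.cons_erase (mp_mem p), ← Multiset.cons_erase (mp_mem r), hab, h2]

lemma key (n : ℕ) :
    (odds (n+2)).card ≤ (odds (n+1)).card + (odds n).card := by
  have hsplit := Finset.card_filter_add_card_filter_not
    (s := odds (n+2)) (p := fun p => (1:ℕ) ∈ p.parts)
  have := cardA n
  have := cardB n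
  omega


lemma card_odds_one : (Nat.Partition.odds 1).card ≤ 1 := by
  apply Finset.card_le_one.mpr
  intro p _ r _
  ext1
  rw [sum_one (fun _ h => p.parts_pos h) p.parts_sum, sum_one (fun _ h => r.parts_pos h) r.parts_sum]

lemma card_odds_two : (Nat.Partition.odds 2).card ≤ 1 := by
  apply Finset.card_le_one.mpr
  intro p hp r hr
  ext1
  rw [sum_two (fun _ h => p.parts_pos h) (mem_odds_iff.mp hp) p.parts_sum,
    sum_two (fun _ h => r.parts_pos h) (mem_odds_iff.mp hr) r.parts_sum]

end QAux

/-- `q n` is the number of partitions of `n` into odd parts. -/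
def q (n : ℕ) : ℕ := (Nat.Partition.odds n).card

theorem q_le_fib (n : ℕ) (hn : 0 < n) : q n ≤ Nat.fib n := by
  induction n using Nat.strong_induction_on with
  | _ n ih =>
    match n with
    | 1 => exact QAux.card_odds_one
    | 2 => exact QAux.card_odds_two
    | (k + 3) =>
      have h1 : q (k + 3) ≤ q (k + 2) + q (k + 1) := QAux.key (k + 1)
      have h2 := ih (k + 2) (by omega) (by omega)
      have h3 := ih (k + 1) (by omega) (by omega)
      have h4 : Nat.fib (k + 3) = Nat.fib (k + 2) + Nat.fib (k + 1) := by
        rw [show k + 3 = (k + 1) + 2 from rfl, Nat.fib_add_two,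
          show k + 1 + 1 = k + 2 from rfl, Nat.add_comm]
      omega
end

section
/- For every positive integer n, Q_1(n) equals the number of odd positive divisors of n; in particular Q_1(n)=τ(n) if n is odd and Q_1(n)=τ(n)−τ(n/2) if n is even, where τ(n) denotes the number of positive divisors of n. -/
/-- The multinomial coefficient of a partition: if the part `i` occurs with
multiplicity `t_i`, it equals `(∑ t_i)! / ∏ (t_i)!`. -/
def partitionMultinomial {n : ℕ} (c : n.Partition) : ℕ :=
  Nat.multinomial c.parts.toFinset fun i => Multiset.count i c.parts

/-- `Q k n` is the number of partitions of `n` into odd parts whose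
multinomial coefficient equals `k`. -/
def Q (k n : ℕ) : ℕ :=
  ((Nat.Partition.odds n).filter fun c => partitionMultinomial c = k).card

lemma one_lt_multinomial {s : Finset ℕ} {f : ℕ → ℕ} {a b : ℕ} (ha : a ∈ s) (hb : b ∈ s)
    (hab : a ≠ b) (hfa : 1 ≤ f a) (hfb : 1 ≤ f b) : 1 < Nat.multinomial s f := by
  rw [← Finset.insert_erase ha, Nat.multinomial_insert (Finset.notMem_erase a s)]
  have hb' : b ∈ s.erase a := Finset.mem_erase.2 ⟨Ne.symm hab, hb⟩
  have h1 : 1 ≤ ∑ i ∈ s.erase a, f i :=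
    le_trans hfb (Finset.single_le_sum (fun i _ => Nat.zero_le _) hb')
  have h2 : f a + 1 ≤ f a + ∑ i ∈ s.erase a, f i := by omega
  have := Nat.choose_le_choose (f a) h2
  rw [Nat.choose_succ_self_right] at this
  calc 1 < (f a + 1) * 1 := by omega
    _ ≤ (f a + ∑ i ∈ s.erase a, f i).choose (f a) * Nat.multinomial (s.erase a) f :=
      Nat.mul_le_mul this (Nat.multinomial_pos _ _)

lemma Q_one_eq (n : ℕ) (hn : 0 < n) :
    Q 1 n = (n.divisors.filter fun d => Odd d).card := by
  rw [Q, eq_comm]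
  apply Finset.card_bij
    (i := fun d hd => ⟨Multiset.replicate (n / d) d,
      fun {i} hi => by
        rw [Multiset.eq_of_mem_replicate hi]
        exact Nat.pos_of_mem_divisors (Finset.mem_filter.1 hd).1,
      by
        rw [Multiset.sum_replicate, smul_eq_mul]
        exact Nat.div_mul_cancel (Nat.dvd_of_mem_divisors (Finset.mem_filter.1 hd).1)⟩)
  · intro d hd
    obtain ⟨hd1, hd2⟩ := Finset.mem_filter.1 hd
    have hdvd := Nat.dvd_of_mem_divisors hd1
    have hdpos := Nat.pos_of_mem_divisors hd1
    have hm : n / d ≠ 0 := Nat.ne_of_gt (Nat.div_pos (Nat.le_of_dvd hn hdvd) hdpos)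
    refine Finset.mem_filter.2 ⟨?_, ?_⟩
    · refine Finset.mem_filter.2 ⟨Finset.mem_univ _, ?_⟩
      intro i hi
      rw [Multiset.eq_of_mem_replicate hi]
      exact Nat.not_even_iff_odd.2 hd2
    · show Nat.multinomial _ _ = 1
      rw [Multiset.toFinset_replicate, if_neg hm]
      exact Nat.multinomial_singleton _ _
  · intro d hd e he h
    have hdpos := Nat.pos_of_mem_divisors (Finset.mem_filter.1 hd).1
    have hepos := Nat.pos_of_mem_divisors (Finset.mem_filter.1 he).1
    have hmd : 0 < n / d := Nat.div_pos (Nat.le_of_dvd hn (Nat.dvd_of_mem_divisors (Finset.mem_filter.1 hd).1)) hdpos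
    have := congrArg Nat.Partition.parts h
    simp only at this
    have hdm : d ∈ Multiset.replicate (n / e) e := by
      rw [← this]; exact Multiset.mem_replicate.2 ⟨Nat.ne_of_gt hmd, rfl⟩
    exact Multiset.eq_of_mem_replicate hdm
  · intro c hc
    obtain ⟨hc1, hc2⟩ := Finset.mem_filter.1 hc
    have hodd : ∀ i ∈ c.parts, ¬Even i := (Finset.mem_filter.1 hc1).2
    have hne : c.parts ≠ 0 := by
      intro h
      have := c.parts_sum
      rw [h] at this
      simp at this
      omega
    obtain ⟨a, ha⟩ := Multiset.exists_mem_of_ne_zero hne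
    have hall : ∀ b ∈ c.parts, b = a := by
      intro b hb
      by_contra hba
      have h1 : 1 < partitionMultinomial c := by
        apply one_lt_multinomial (Multiset.mem_toFinset.2 ha) (Multiset.mem_toFinset.2 hb)
          (Ne.symm hba)
        · exact Multiset.one_le_count_iff_mem.2 ha
        · exact Multiset.one_le_count_iff_mem.2 hb
      omega
    have hrep : c.parts = Multiset.replicate (Multiset.card c.parts) a :=
      Multiset.eq_replicate_card.2 hall
    have hsum : Multiset.card c.parts * a = n := by
      have := c.parts_sum
      rw [hrep] at this
      simpa [Multiset.sum_replicate, smul_eq_mul] using this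
    have hapos : 0 < a := c.parts_pos ha
    have hadvd : a ∣ n := Dvd.intro_left _ hsum
    refine ⟨a, Finset.mem_filter.2 ⟨Nat.mem_divisors.2 ⟨hadvd, Nat.ne_of_gt hn⟩,
      Nat.not_even_iff_odd.1 (hodd a ha)⟩, ?_⟩
    apply Nat.Partition.ext
    show Multiset.replicate (n / a) a = c.parts
    have hcard : n / a = Multiset.card c.parts :=
      Nat.div_eq_of_eq_mul_left hapos hsum.symm
    rw [hcard, ← hrep]

theorem Q_one_eq_card_odd_divisors (n : ℕ) (hn : 0 < n) :
    Q 1 n = (n.divisors.filter fun d => Odd d).card ∧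
    (Odd n → Q 1 n = n.divisors.card) ∧
    (Even n → Q 1 n = n.divisors.card - (n / 2).divisors.card) := by
  refine ⟨Q_one_eq n hn, ?_, ?_⟩
  · intro hodd
    rw [Q_one_eq n hn]
    congr 1
    apply Finset.filter_true_of_mem
    intro d hd
    exact Nat.not_even_iff_odd.1 fun hev => (Nat.not_even_iff_odd.2 hodd)
      (even_iff_two_dvd.2 (dvd_trans (even_iff_two_dvd.1 hev) (Nat.dvd_of_mem_divisors hd)))
  · intro heven
    rw [Q_one_eq n hn]
    have hkey : (n.divisors.filter fun d => ¬ Odd d) = (n / 2).divisors.image (2 * ·) := by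
      ext d
      simp only [Finset.mem_filter, Nat.mem_divisors, Finset.mem_image, Nat.not_odd_iff_even]
      constructor
      · rintro ⟨⟨hdvd, hn0⟩, ⟨e, he⟩⟩
        refine ⟨e, ⟨?_, ?_⟩, by show 2 * e = d; omega⟩
        · have h2 : (2 * e) ∣ n := by rw [show 2 * e = d by omega]; exact hdvd
          exact (Nat.dvd_div_iff_mul_dvd (even_iff_two_dvd.1 heven)).2 h2
        · have : n / 2 ≠ 0 := by
            have := Nat.div_pos (by obtain ⟨r, hr⟩ := heven; omega : 2 ≤ n) (by norm_num)
            omega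
          exact this
      · rintro ⟨e, ⟨hdvd, hn0⟩, rfl⟩
        have h2 : (2 * e) ∣ n := (Nat.dvd_div_iff_mul_dvd (even_iff_two_dvd.1 heven)).1 hdvd
        exact ⟨⟨h2, hn.ne'⟩, even_two_mul e⟩
    have hinjcard : ((n / 2).divisors.image (2 * ·)).card = (n / 2).divisors.card :=
      Finset.card_image_of_injective _ (fun a b h => by omega)
    have hsplit := Finset.card_filter_add_card_filter_not
      (s := n.divisors) (p := fun d => Odd d)
    rw [hkey, hinjcard] at hsplit
    omega
end

section
/- For every positive integer n, Q_2(n) = 0 if n is odd, and Q_2(n) = ⌊n/4⌋ if n is even. -/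
lemma one_lt_choose {n k : ℕ} (h0 : 0 < k) (h1 : k < n) : 1 < n.choose k := by
  obtain ⟨m, rfl⟩ := Nat.exists_eq_succ_of_ne_zero (by omega : n ≠ 0)
  obtain ⟨j, rfl⟩ := Nat.exists_eq_succ_of_ne_zero (by omega : k ≠ 0)
  rw [Nat.choose_succ_succ]
  simp only [Nat.succ_eq_add_one]
  have h2 : 0 < m.choose j := Nat.choose_pos (by omega)
  have h3 : 0 < m.choose (j+1) := Nat.choose_pos (by omega)
  omega

lemma choose_eq_two {n k : ℕ} (h : n.choose k = 2) : n = 2 ∧ k = 1 := by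
  have hk0 : k ≠ 0 := by rintro rfl; simp at h
  have hkn' : k < n := by
    by_contra hc
    rcases Nat.lt_or_ge n k with h1 | h1
    · rw [Nat.choose_eq_zero_of_lt h1] at h; omega
    · have : k = n := by omega
      subst this; simp at h
  rcases Nat.lt_or_ge k 2 with hk | hk
  · have hk1 : k = 1 := by omega
    subst hk1; rw [Nat.choose_one_right] at h; exact ⟨h, rfl⟩
  · exfalso
    obtain ⟨m, rfl⟩ := Nat.exists_eq_succ_of_ne_zero (by omega : n ≠ 0)
    obtain ⟨j, rfl⟩ := Nat.exists_eq_succ_of_ne_zero hk0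
    rw [Nat.choose_succ_succ] at h
    simp only [Nat.succ_eq_add_one] at h
    have h3 : 0 < m.choose (j+1) := Nat.choose_pos (by omega)
    have h4 : 1 < m.choose j := one_lt_choose (by omega) (by omega)
    omega

lemma sum_eq_one {s : Finset ℕ} {f : ℕ → ℕ} (hf : ∀ i ∈ s, 0 < f i)
    (h : ∑ i ∈ s, f i = 1) : ∃ b, s = {b} ∧ f b = 1 := by
  have hne : s.Nonempty := by
    rcases s.eq_empty_or_nonempty with rfl | hne
    · simp at h
    · exact hne
  obtain ⟨b, hb⟩ := hne
  have hfb : f b ≤ 1 := h ▸ Finset.single_le_sum (fun i _ => Nat.zero_le _) hb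
  have hfb1 : f b = 1 := by have := hf b hb; omega
  refine ⟨b, ?_, hfb1⟩
  have hsum : ∑ i ∈ s.erase b, f i = 0 := by
    have := Finset.add_sum_erase s f hb
    omega
  have he : s.erase b = ∅ := by
    rw [Finset.eq_empty_iff_forall_notMem]
    intro x hx
    have h1 := hf x (Finset.mem_of_mem_erase hx)
    have h2 := Finset.sum_eq_zero_iff.mp hsum x hx
    omega
  rw [← Finset.insert_erase hb, he]; rfl

lemma multinomial_eq_two {s : Finset ℕ} {f : ℕ → ℕ} (hf : ∀ i ∈ s, 0 < f i)
    (h : Nat.multinomial s f = 2) : ∃ a b, a ≠ b ∧ s = {a, b} ∧ f a = 1 ∧ f b = 1 := by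
  induction s using Finset.induction_on with
  | empty => simp [Nat.multinomial] at h
  | @insert a s ha ih =>
    rw [Nat.multinomial_insert ha] at h
    set C := (f a + ∑ i ∈ s, f i).choose (f a) with hC
    set M := Nat.multinomial s f with hM
    have hMpos : 0 < M := Nat.multinomial_pos s f
    have hfa : 0 < f a := hf a (Finset.mem_insert_self a s)
    have hfs : ∀ i ∈ s, 0 < f i := fun i hi => hf i (Finset.mem_insert_of_mem hi)
    have hcases : (C = 1 ∧ M = 2) ∨ (C = 2 ∧ M = 1) := by
      have hCpos : 0 < C := Nat.choose_pos (by omega)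
      rcases Nat.lt_or_ge C 2 with h1 | h1
      · have hC1 : C = 1 := by omega
        rw [hC1, one_mul] at h
        exact Or.inl ⟨hC1, h⟩
      · right
        have hM1 : M = 1 := by nlinarith
        rw [hM1, mul_one] at h
        exact ⟨h, hM1⟩
    rcases hcases with ⟨hC1, hM2⟩ | ⟨hC2, hM1⟩
    · exfalso
      obtain ⟨x, y, hxy, hs, hfx, hfy⟩ := ih hfs hM2
      have hsum : ∑ i ∈ s, f i = 2 := by
        rw [hs, Finset.sum_pair hxy, hfx, hfy]
      rw [hsum] at hC
      have := one_lt_choose hfa (by omega : f a < f a + 2)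
      omega
    · have hC2' : (f a + ∑ i ∈ s, f i).choose (f a) = 2 := by rw [← hC]; exact hC2
      obtain ⟨h2, h1⟩ := choose_eq_two hC2'
      have hsum1 : ∑ i ∈ s, f i = 1 := by omega
      obtain ⟨b, rfl, hfb⟩ := sum_eq_one hfs hsum1
      exact ⟨a, b, by simpa using ha, rfl, h1, hfb⟩

lemma count_pair_left {a b : ℕ} (h : a ≠ b) : Multiset.count a ({a, b} : Multiset ℕ) = 1 := by
  simp [Multiset.count_cons, Multiset.count_singleton, h]

lemma count_pair_right {a b : ℕ} (h : a ≠ b) : Multiset.count b ({a, b} : Multiset ℕ) = 1 := by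
  simp [Multiset.count_cons, Multiset.count_singleton, h.symm]

/-- forward: multinomial of a two-distinct-element multiset is 2. -/
lemma multinomial_of_pair {n : ℕ} (c : n.Partition) {a b : ℕ} (hab : a ≠ b)
    (hp : c.parts = {a, b}) : partitionMultinomial c = 2 := by
  unfold partitionMultinomial
  rw [hp]
  have htf : ({a, b} : Multiset ℕ).toFinset = {a, b} := by
    simp [Multiset.toFinset_cons, Multiset.toFinset_singleton]
  rw [htf]
  have hab' : a ∉ ({b} : Finset ℕ) := by simpa using hab
  rw [show ({a, b} : Finset ℕ) = insert a {b} from rfl, Nat.multinomial_insert hab']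
  rw [count_pair_left hab]
  simp [Finset.sum_singleton, Multiset.count_cons_of_ne (Ne.symm hab)]

/-- backward: a partition with multinomial 2 has parts {a,b}, a < b. -/
lemma pair_of_multinomial {n : ℕ} (c : n.Partition) (h : partitionMultinomial c = 2) :
    ∃ a b, a < b ∧ c.parts = {a, b} := by
  unfold partitionMultinomial at h
  have hf : ∀ i ∈ c.parts.toFinset, 0 < Multiset.count i c.parts := by
    intro i hi
    rw [Multiset.count_pos]
    exact Multiset.mem_toFinset.mp hi
  obtain ⟨a, b, hab, hs, hfa, hfb⟩ := multinomial_eq_two hf h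
  have hparts : c.parts = {a, b} := by
    ext x
    by_cases hx : x = a
    · subst hx; rw [count_pair_left hab]; exact hfa
    · by_cases hy : x = b
      · subst hy; rw [count_pair_right hab]; exact hfb
      · have hxm : x ∉ c.parts := by
          intro hm
          have : x ∈ c.parts.toFinset := Multiset.mem_toFinset.mpr hm
          rw [hs] at this
          simp at this
          tauto
        rw [Multiset.count_eq_zero_of_notMem hxm]
        simp [Multiset.count_cons, Multiset.count_singleton, hx, hy]
  rcases Nat.lt_or_ge a b with hlt | hge
  · exact ⟨a, b, hlt, hparts⟩
  · refine ⟨b, a, by omega, ?_⟩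
    rw [hparts]
    exact Multiset.pair_comm a b

def pairPartition (n a : ℕ) (h1 : 0 < a) (h2 : a < n) : n.Partition where
  parts := {a, n - a}
  parts_pos := by
    intro i hi
    rcases Multiset.mem_cons.mp hi with rfl | hi
    · exact h1
    · rw [Multiset.mem_singleton] at hi; omega
  parts_sum := by
    rw [Multiset.insert_eq_cons, Multiset.sum_cons, Multiset.sum_singleton]; omega

def Sset (n : ℕ) : Finset ℕ :=
  (Finset.range n).filter fun a => Odd a ∧ Odd (n - a) ∧ 2 * a < n

lemma Q_eq_card_Sset (n : ℕ) : Q 2 n = (Sset n).card := by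
  symm
  unfold Q Sset
  refine Finset.card_bij (fun a ha => pairPartition n a ?_ ?_) ?_ ?_ ?_
  · have := Finset.mem_filter.mp ha
    exact this.2.1.pos
  · exact Finset.mem_range.mp (Finset.mem_filter.mp ha).1
  · -- maps into target
    intro a ha
    have hm := Finset.mem_filter.mp ha
    have hoa := hm.2.1
    have hona := hm.2.2.1
    have h2a := hm.2.2.2
    have han : a < n := Finset.mem_range.mp hm.1
    have hne : a ≠ n - a := by omega
    rw [Finset.mem_filter]
    constructor
    · rw [Nat.Partition.odds, Nat.Partition.restricted, Finset.mem_filter]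
      refine ⟨Finset.mem_univ _, ?_⟩
      intro i hi
      simp only [pairPartition] at hi
      rcases Multiset.mem_cons.mp hi with rfl | hi
      · exact (Nat.not_even_iff_odd).mpr hoa
      · rw [Multiset.mem_singleton] at hi; subst hi
        exact (Nat.not_even_iff_odd).mpr hona
    · exact multinomial_of_pair _ hne rfl
  · -- injective
    intro a1 ha1 a2 ha2 heq
    have hp := congrArg Nat.Partition.parts heq
    simp only [pairPartition] at hp
    have h1 := Finset.mem_filter.mp ha1
    have h2 := Finset.mem_filter.mp ha2
    have hr1 := Finset.mem_range.mp h1.1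
    have hr2 := Finset.mem_range.mp h2.1
    have h2a1 := h1.2.2.2
    have h2a2 := h2.2.2.2
    have : a1 ∈ ({a2, n - a2} : Multiset ℕ) := by rw [← hp]; simp
    rcases Multiset.mem_cons.mp this with h | h
    · exact h
    · rw [Multiset.mem_singleton] at h; omega
  · -- surjective
    intro c hc
    obtain ⟨hodds, hmul⟩ := Finset.mem_filter.mp hc
    obtain ⟨a, b, hab, hp⟩ := pair_of_multinomial c hmul
    have hsum : a + b = n := by
      have := c.parts_sum
      rw [hp, Multiset.insert_eq_cons, Multiset.sum_cons, Multiset.sum_singleton] at this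
      exact this
    have hpos_a : 0 < a := c.parts_pos (by rw [hp]; simp)
    have hpos_b : 0 < b := c.parts_pos (by rw [hp]; simp)
    have hodd : ∀ i ∈ c.parts, ¬Even i := by
      rw [Nat.Partition.odds, Nat.Partition.restricted, Finset.mem_filter] at hodds
      exact hodds.2
    have hoa : Odd a := Nat.not_even_iff_odd.mp (hodd a (by rw [hp]; simp))
    have hob : Odd b := Nat.not_even_iff_odd.mp (hodd b (by rw [hp]; simp))
    refine ⟨a, ?_, ?_⟩
    · rw [Finset.mem_filter, Finset.mem_range]
      refine ⟨by omega, hoa, ?_, by omega⟩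
      have : n - a = b := by omega
      rw [this]; exact hob
    · have hb : b = n - a := by omega
      subst hb
      ext1
      simp only [pairPartition]
      rw [hp]

lemma card_odd_range (m : ℕ) : ((Finset.range m).filter fun a => Odd a).card = m / 2 := by
  induction m with
  | zero => simp
  | succ m ih =>
    rw [Finset.range_add_one, Finset.filter_insert]
    by_cases h : Odd m
    · rw [if_pos h, Finset.card_insert_of_notMem (by simp), ih]
      have := Nat.odd_iff.mp h
      omega
    · rw [if_neg h, ih]
      have := Nat.even_iff.mp (Nat.not_odd_iff_even.mp h)
      omega


theorem Q_two_eq (n : ℕ) (hn : 0 < n) :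
    (Odd n → Q 2 n = 0) ∧ (Even n → Q 2 n = n / 4) := by
  rw [Q_eq_card_Sset]
  constructor
  · intro hodd
    rw [Finset.card_eq_zero]
    rw [Finset.eq_empty_iff_forall_notMem]
    intro a ha
    have hm := Finset.mem_filter.mp ha
    have hoa := hm.2.1
    have hona := hm.2.2.1
    have : Even n := by
      have : n = a + (n - a) := by omega
      rw [this]
      exact hoa.add_odd hona
    exact (Nat.not_even_iff_odd.mpr hodd) this
  · intro heven
    have h2 : 2 ∣ n := heven.two_dvd
    have hS : Sset n = (Finset.range (n / 2)).filter fun a => Odd a := by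
      ext a
      simp only [Sset, Finset.mem_filter, Finset.mem_range]
      constructor
      · rintro ⟨hr, hoa, hona, h2a⟩
        exact ⟨(Nat.lt_div_iff_mul_lt' h2 a).mpr (by omega), hoa⟩
      · rintro ⟨hr, hoa⟩
        have h2a : 2 * a < n := (Nat.lt_div_iff_mul_lt' h2 a).mp hr
        refine ⟨by omega, hoa, ?_, h2a⟩
        exact Nat.Even.sub_odd (by omega) heven hoa
    rw [hS, card_odd_range, Nat.div_div_eq_div_mul]
end

section
/- Let p be an odd prime and let n, r be positive integers. Then Q_{p^r}(n) = ⌈(1/2)·⌊(n−1)/(p^r−1)⌋⌉ − δ, where δ = 1 if p^r divides n and δ = 0 otherwise, when n is odd; and Q_{p^r}(n) = 0 when n is even. -/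
-- C(m,k) ≥ m for 0 < k < m
lemma my_le_choose : ∀ m k : ℕ, 0 < k → k < m → m ≤ m.choose k := by
  intro m
  induction m with
  | zero => omega
  | succ m ih =>
    intro k hk0 hkm
    rcases Nat.lt_or_ge k m with h | h
    · obtain ⟨j, rfl⟩ : ∃ j, k = j + 1 := ⟨k - 1, by omega⟩
      rw [Nat.choose_succ_succ]
      simp only [Nat.succ_eq_add_one]
      have h1 : 0 < m.choose j := Nat.choose_pos (by omega)
      have h2 : m ≤ m.choose (j + 1) := ih (j + 1) hk0 h
      omega
    · have : k = m := by omega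
      subst this
      rw [Nat.choose_succ_self_right]

lemma my_choose_prime_pow {p r m k : ℕ} (hp : p.Prime) (_hr : 0 < r)
    (hk0 : 0 < k) (hkm : k < m) (h : m.choose k = p ^ r) :
    m = p ^ r ∧ (k = 1 ∨ k + 1 = m) := by
  have hm : 0 < m := by omega
  have hfac : (m.choose k).factorization p = r := by
    rw [h, hp.factorization_pow, Finsupp.single_eq_same]
  have hle : p ^ r ≤ m := by
    have := Nat.pow_factorization_choose_le (p := p) (n := m) (k := k) hm
    rwa [hfac] at this
  have hk : k = 1 ∨ k + 1 = m := by
    by_contra hcon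
    push_neg at hcon
    have h2k : 2 ≤ k := by omega
    have h2m : k + 2 ≤ m := by omega
    obtain ⟨m', rfl⟩ : ∃ m', m = m' + 1 := ⟨m - 1, by omega⟩
    obtain ⟨k', rfl⟩ : ∃ k', k = k' + 1 := ⟨k - 1, by omega⟩
    rw [Nat.choose_succ_succ] at h
    simp only [Nat.succ_eq_add_one] at h
    have hb1 : m' ≤ m'.choose k' := my_le_choose m' k' (by omega) (by omega)
    have hb2 : m' ≤ m'.choose (k' + 1) := my_le_choose m' (k' + 1) (by omega) (by omega)
    omega
  refine ⟨?_, hk⟩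
  rcases hk with h1 | h1
  · rw [h1, Nat.choose_one_right] at h; omega
  · have : m.choose k = k + 1 := by
      rw [← h1, Nat.choose_succ_self_right]
    omega

lemma my_multinomial_structure {p r : ℕ} (hp : p.Prime) (hpodd : Odd p) (hr : 0 < r)
    (s : Finset ℕ) (f : ℕ → ℕ) (hf : ∀ i ∈ s, 0 < f i)
    (h : Nat.multinomial s f = p ^ r) :
    ∃ a b, a ≠ b ∧ s = {a, b} ∧ f a = 1 ∧ f b = p ^ r - 1 := by
  have hpr1 : 1 < p ^ r := Nat.one_lt_pow (by omega) hp.one_lt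
  have key : ∀ i ∈ s, (∑ j ∈ s, f j).choose (f i) * Nat.multinomial (s.erase i) f = p ^ r := by
    intro i hi
    rw [← h]
    conv_rhs => rw [← Finset.insert_erase hi]
    rw [Nat.multinomial_insert (Finset.notMem_erase i s), Finset.add_sum_erase _ f hi]
  rcases Nat.lt_or_ge s.card 3 with hcard | hcard
  · rcases Nat.lt_or_ge s.card 2 with hcard1 | hcard2
    · exfalso
      rcases Nat.lt_or_ge s.card 1 with hcard0 | hcard1'
      · have : s = ∅ := Finset.card_eq_zero.mp (by omega)
        rw [this, Nat.multinomial_empty] at h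
        omega
      · obtain ⟨a, ha⟩ := Finset.card_eq_one.mp (by omega : s.card = 1)
        rw [ha, Nat.multinomial_singleton] at h
        omega
    · obtain ⟨a, b, hab, hs⟩ := Finset.card_eq_two.mp (by omega : s.card = 2)
      subst hs
      have hmul : (f a + f b).choose (f a) = p ^ r := by
        rw [show ({a, b} : Finset ℕ) = insert a {b} from rfl,
          Nat.multinomial_insert (by simpa using hab), Nat.multinomial_singleton,
          Finset.sum_singleton, mul_one] at h
        exact h
      have hfa : 0 < f a := hf a (by simp)
      have hfb : 0 < f b := hf b (by simp)
      obtain ⟨hsum, hcase⟩ := my_choose_prime_pow hp hr hfa (by omega) hmul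
      rcases hcase with h1 | h1
      · exact ⟨a, b, hab, rfl, h1, by omega⟩
      · exact ⟨b, a, hab.symm, Finset.pair_comm a b, by omega, by omega⟩
  · exfalso
    have hone : ∀ i ∈ s, f i = 1 := by
      intro i hi
      have hdvd : (∑ j ∈ s, f j).choose (f i) ∣ p ^ r := ⟨_, (key i hi).symm⟩
      obtain ⟨a', _, hchoose⟩ := (Nat.dvd_prime_pow hp).mp hdvd
      have herase : 2 ≤ ∑ j ∈ s.erase i, f j := by
        have h1 : (s.erase i).card = s.card - 1 := Finset.card_erase_of_mem hi
        calc (2 : ℕ) ≤ (s.erase i).card := by omega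
        _ = (s.erase i).card • 1 := by simp
        _ ≤ ∑ j ∈ s.erase i, f j :=
            Finset.card_nsmul_le_sum _ _ _ (fun x hx => hf x (Finset.mem_of_mem_erase hx))
      have hT : ∑ j ∈ s, f j = f i + ∑ j ∈ s.erase i, f j := (Finset.add_sum_erase _ f hi).symm
      have hfi : 0 < f i := hf i hi
      have hlt : f i < ∑ j ∈ s, f j := by omega
      have ha'pos : 0 < a' := by
        by_contra ha0
        have : a' = 0 := by omega
        subst this
        simp only [pow_zero] at hchoose
        have := my_le_choose _ _ hfi hlt
        omega
      obtain ⟨hsum, hcase⟩ := my_choose_prime_pow hp ha'pos hfi hlt hchoose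
      omega
    have hsum : ∑ j ∈ s, f j = s.card := by
      rw [Finset.sum_congr rfl hone, Finset.sum_const, smul_eq_mul, mul_one]
    have hprod : ∏ j ∈ s, Nat.factorial (f j) = 1 :=
      Finset.prod_eq_one fun i hi => by rw [hone i hi]; rfl
    have hmul : Nat.multinomial s f = Nat.factorial s.card := by
      rw [Nat.multinomial, hsum, hprod, Nat.div_one]
    have heven : 2 ∣ Nat.factorial s.card := Nat.dvd_factorial (by norm_num) (by omega)
    have hodd : Odd (p ^ r) := hpodd.pow
    rw [h] at hmul
    rw [Nat.odd_iff, hmul] at hodd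
    omega

lemma my_multinomial_cons_replicate {a b M : ℕ} (hab : a ≠ b) (hM : 0 < M) :
    Nat.multinomial (a ::ₘ Multiset.replicate M b).toFinset
      (fun i => Multiset.count i (a ::ₘ Multiset.replicate M b)) = M + 1 := by
  have htf : (a ::ₘ Multiset.replicate M b).toFinset = insert a {b} := by
    rw [Multiset.toFinset_cons, Multiset.toFinset_replicate, if_neg (by omega)]
  rw [htf, Nat.multinomial_insert (by simpa using hab), Nat.multinomial_singleton,
    Finset.sum_singleton, mul_one]
  have hca : Multiset.count a (a ::ₘ Multiset.replicate M b) = 1 := by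
    rw [Multiset.count_cons_self, Multiset.count_replicate]
    split_ifs <;> omega
  have hcb : Multiset.count b (a ::ₘ Multiset.replicate M b) = M := by
    rw [Multiset.count_cons_of_ne (Ne.symm hab), Multiset.count_replicate, if_pos rfl]
  rw [hca, hcb, Nat.choose_one_right]
  omega

lemma my_parts_structure {p r n : ℕ} (hp : p.Prime) (hpodd : Odd p) (hr : 0 < r)
    (c : n.Partition) (h : partitionMultinomial c = p ^ r) :
    ∃ a b, a ≠ b ∧ c.parts = a ::ₘ Multiset.replicate (p ^ r - 1) b := by
  obtain ⟨a, b, hab, hs, hfa, hfb⟩ := my_multinomial_structure hp hpodd hr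
    c.parts.toFinset (fun i => Multiset.count i c.parts)
    (fun i hi => Multiset.count_pos.mpr (Multiset.mem_toFinset.mp hi)) h
  refine ⟨a, b, hab, ?_⟩
  rw [Multiset.ext]
  intro i
  rw [Multiset.count_cons, Multiset.count_replicate]
  by_cases hia : i = a
  · subst hia
    rw [hfa]
    split_ifs <;> omega
  · by_cases hib : i = b
    · subst hib
      rw [hfb]
      split_ifs <;> omega
    · have : i ∉ c.parts := by
        intro hmem
        have : i ∈ ({a, b} : Finset ℕ) := hs ▸ Multiset.mem_toFinset.mpr hmem
        simp only [Finset.mem_insert, Finset.mem_singleton] at this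
        tauto
      rw [Multiset.count_eq_zero_of_notMem this]
      split_ifs <;> omega

lemma my_card_odd_Icc : ∀ K : ℕ, ((Finset.Icc 1 K).filter (fun b => Odd b)).card = (K + 1) / 2 := by
  intro K
  induction K with
  | zero => rfl
  | succ K ih =>
    rw [← Finset.Ico_insert_right (by omega : 1 ≤ K + 1), Finset.Ico_add_one_right_eq_Icc,
      Finset.filter_insert]
    by_cases h : Odd (K + 1)
    · rw [if_pos h, Finset.card_insert_of_notMem (by
        intro hmem
        have := Finset.mem_Icc.mp (Finset.mem_filter.mp hmem).1
        omega)]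
      rw [ih]
      rw [Nat.odd_iff] at h
      omega
    · rw [if_neg h, ih]
      rw [Nat.odd_iff] at h
      omega

lemma my_ceil_half (K : ℕ) : (⌈((K : ℤ) : ℚ) / 2⌉ : ℤ) = ((K + 1) / 2 : ℕ) := by
  have h : (⌈((K : ℤ) : ℚ) / 2⌉ : ℤ) = -⌊-(((K : ℤ) : ℚ) / 2)⌋ := by
    rw [Int.floor_neg, neg_neg]
  rw [h, show -(((K : ℤ) : ℚ) / 2) = ((-(K : ℤ) : ℤ) : ℚ) / ((2 : ℕ) : ℚ) by push_cast; ring,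
    Rat.floor_intCast_div_natCast]
  omega

theorem Q_prime_pow_odd (p n r : ℕ) (hp : p.Prime) (hpodd : Odd p)
    (hn : 0 < n) (hr : 0 < r) :
    (Odd n → (Q (p ^ r) n : ℤ) =
      ⌈(⌊((n : ℚ) - 1) / ((p : ℚ) ^ r - 1)⌋ : ℚ) / 2⌉ -
        (if p ^ r ∣ n then 1 else 0)) ∧
    (Even n → Q (p ^ r) n = 0) := by
  have hp3 : 3 ≤ p := by
    have h2 := hp.two_le
    have h1 := Nat.odd_iff.mp hpodd
    omega
  have hodd_pr : Odd (p ^ r) := hpodd.pow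
  have hpr3 : 3 ≤ p ^ r := le_trans hp3 (Nat.le_self_pow (by omega) p)
  obtain ⟨M, hMdef⟩ : ∃ M, M = p ^ r - 1 := ⟨_, rfl⟩
  have hM2 : 2 ≤ M := by omega
  have hMeven : Even M := by
    have := Nat.odd_iff.mp hodd_pr
    rw [Nat.even_iff]
    omega
  have hMpos : 0 < M := by omega
  -- structure of partitions in the filter
  have hstruct : ∀ c : n.Partition,
      c ∈ (Nat.Partition.odds n).filter (fun c => partitionMultinomial c = p ^ r) →
      ∃ b, Odd b ∧ 0 < b ∧ M * b + 1 ≤ n ∧ Odd (n - M * b) ∧ p ^ r * b ≠ n ∧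
        c.parts = (n - M * b) ::ₘ Multiset.replicate M b := by
    intro c hc
    rw [Finset.mem_filter] at hc
    obtain ⟨hodds, hmul⟩ := hc
    have hoddparts : ∀ i ∈ c.parts, ¬ Even i := by
      simp only [Nat.Partition.odds, Nat.Partition.restricted, Finset.mem_filter, Finset.mem_univ, true_and] at hodds
      exact hodds
    obtain ⟨a, b, hab, hparts⟩ := my_parts_structure hp hpodd hr c hmul
    rw [← hMdef] at hparts
    have hb_mem : b ∈ c.parts := by
      rw [hparts]
      exact Multiset.mem_cons_of_mem (Multiset.mem_replicate.mpr ⟨by omega, rfl⟩)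
    have ha_mem : a ∈ c.parts := by rw [hparts]; exact Multiset.mem_cons_self a _
    have hbodd : Odd b := (Nat.not_even_iff_odd).mp (hoddparts b hb_mem)
    have haodd : Odd a := (Nat.not_even_iff_odd).mp (hoddparts a ha_mem)
    have hbpos : 0 < b := c.parts_pos hb_mem
    have hapos : 0 < a := c.parts_pos ha_mem
    have hsum : a + M * b = n := by
      have h := c.parts_sum
      rw [hparts, Multiset.sum_cons, Multiset.sum_replicate, smul_eq_mul] at h
      exact h
    have hprb : p ^ r * b = M * b + b := by
      have h1 : p ^ r = M + 1 := by omega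
      rw [h1]; ring
    refine ⟨b, hbodd, hbpos, by omega, ?_, ?_, ?_⟩
    · rw [show n - M * b = a by omega]; exact haodd
    · intro hcon
      apply hab
      omega
    · rw [hparts, show n - M * b = a by omega]
  constructor
  · -- odd case
    intro hnodd
    have hn2 : n % 2 = 1 := Nat.odd_iff.mp hnodd
    obtain ⟨K, hKdef⟩ : ∃ K, K = (n - 1) / M := ⟨_, rfl⟩
    obtain ⟨T, hTdef⟩ : ∃ T, T = (Finset.Icc 1 K).filter (fun b => Odd b ∧ p ^ r * b ≠ n) := ⟨_, rfl⟩
    have hmemT : ∀ b : ℕ, b ∈ T ↔ (Odd b ∧ M * b + 1 ≤ n ∧ p ^ r * b ≠ n) := by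
      intro b
      rw [hTdef, Finset.mem_filter, Finset.mem_Icc, hKdef]
      constructor
      · rintro ⟨⟨h1, h2⟩, h3, h4⟩
        have h5 := (Nat.le_div_iff_mul_le hMpos).mp h2
        rw [mul_comm] at h5
        exact ⟨h3, by omega, h4⟩
      · rintro ⟨h1, h2, h3⟩
        have hb1 : 1 ≤ b := by
          have := Nat.odd_iff.mp h1; omega
        refine ⟨⟨hb1, (Nat.le_div_iff_mul_le hMpos).mpr ?_⟩, h1, h3⟩
        rw [mul_comm]
        omega
    have hcardeq : T.card =
        ((Nat.Partition.odds n).filter fun c => partitionMultinomial c = p ^ r).card := by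
      refine Finset.card_bij (fun b hb =>
        ⟨(n - M * b) ::ₘ Multiset.replicate M b, ?_, ?_⟩) ?_ ?_ ?_
      · -- parts_pos
        intro i hi
        obtain ⟨h1, h2, h3⟩ := (hmemT _).mp hb
        rcases Multiset.mem_cons.mp hi with h | h
        · omega
        · have := (Multiset.mem_replicate.mp h).2
          have := Nat.odd_iff.mp h1
          omega
      · -- parts_sum
        obtain ⟨h1, h2, h3⟩ := (hmemT _).mp hb
        rw [Multiset.sum_cons, Multiset.sum_replicate, smul_eq_mul]
        omega
      · -- maps to filter
        intro b hb
        obtain ⟨h1, h2, h3⟩ := (hmemT _).mp hb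
        have hab : n - M * b ≠ b := by
          intro hcon
          apply h3
          have hprb : p ^ r * b = M * b + b := by
            have he : p ^ r = M + 1 := by omega
            rw [he]; ring
          omega
        rw [Finset.mem_filter]
        constructor
        · simp only [Nat.Partition.odds, Nat.Partition.restricted, Finset.mem_filter, Finset.mem_univ, true_and]
          intro i hi
          rcases Multiset.mem_cons.mp hi with h | h
          · subst h
            rw [Nat.not_even_iff_odd]
            exact Nat.Odd.sub_even (by omega) hnodd (hMeven.mul_right b)
          · rw [(Multiset.mem_replicate.mp h).2, Nat.not_even_iff_odd]
            exact h1
        · show Nat.multinomial _ _ = p ^ r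
          rw [my_multinomial_cons_replicate hab hMpos]
          omega
      · -- injective
        intro b1 hb1 b2 hb2 heq
        by_contra hne
        have hparts := congrArg Nat.Partition.parts heq
        simp only at hparts
        have hc := congrArg (Multiset.count b1) hparts
        rw [Multiset.count_cons, Multiset.count_cons, Multiset.count_replicate,
          Multiset.count_replicate] at hc
        split_ifs at hc <;> omega
      · -- surjective
        intro c hc
        obtain ⟨b, hbodd, hbpos, hble, hsub, hne, hparts⟩ := hstruct c hc
        exact ⟨b, (hmemT b).mpr ⟨hbodd, hble, hne⟩, Nat.Partition.ext hparts.symm⟩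
    have hK1 : p ^ r ∣ n → 1 ≤ K := by
      intro hdvd
      have := Nat.le_of_dvd hn hdvd
      rw [hKdef]
      rw [Nat.le_div_iff_mul_le hMpos]
      omega
    have hTcard : T.card = (K + 1) / 2 - (if p ^ r ∣ n then 1 else 0) := by
      by_cases hdvd : p ^ r ∣ n
      · rw [if_pos hdvd]
        obtain ⟨b0, hb0⟩ := hdvd
        have hb0odd : Odd b0 := (Nat.odd_mul.mp (hb0 ▸ hnodd)).2
        have hb0pos : 0 < b0 := by
          have := Nat.odd_iff.mp hb0odd; omega
        have hMb0 : M * b0 + b0 = n := by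
          have he : p ^ r = M + 1 := by omega
          rw [hb0, he]; ring
        have hb0K : b0 ∈ (Finset.Icc 1 K).filter (fun b => Odd b) := by
          rw [Finset.mem_filter, Finset.mem_Icc, hKdef]
          refine ⟨⟨by omega, (Nat.le_div_iff_mul_le hMpos).mpr ?_⟩, hb0odd⟩
          rw [mul_comm]
          omega
        have hTerase : T = ((Finset.Icc 1 K).filter (fun b => Odd b)).erase b0 := by
          ext x
          simp only [hTdef, Finset.mem_filter, Finset.mem_erase, Finset.mem_Icc]
          constructor
          · rintro ⟨hx1, hx2, hx3⟩
            exact ⟨fun hxb0 => hx3 (by rw [hxb0, ← hb0]), hx1, hx2⟩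
          · rintro ⟨hx0, hx1, hx2⟩
            refine ⟨hx1, hx2, fun hcon => hx0 ?_⟩
            have : p ^ r * x = p ^ r * b0 := by rw [hcon, hb0]
            exact Nat.eq_of_mul_eq_mul_left (by positivity) this
        rw [hTerase, Finset.card_erase_of_mem hb0K, my_card_odd_Icc K]
      · rw [if_neg hdvd]
        have hTeq : T = (Finset.Icc 1 K).filter (fun b => Odd b) := by
          ext x
          simp only [hTdef, Finset.mem_filter, Finset.mem_Icc]
          constructor
          · rintro ⟨hx1, hx2, _⟩
            exact ⟨hx1, hx2⟩
          · rintro ⟨hx1, hx2⟩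
            exact ⟨hx1, hx2, fun hcon => hdvd ⟨x, hcon.symm⟩⟩
        rw [hTeq, my_card_odd_Icc K]
        omega
    have hfloor : (⌊((n : ℚ) - 1) / ((p : ℚ) ^ r - 1)⌋ : ℤ) = (K : ℤ) := by
      have h1 : ((n : ℚ) - 1) = (((n - 1 : ℕ) : ℤ) : ℚ) := by
        rw [Nat.cast_sub hn]
        push_cast
        ring
      have h2 : ((p : ℚ) ^ r - 1) = ((M : ℕ) : ℚ) := by
        rw [hMdef, Nat.cast_sub (by omega : 1 ≤ p ^ r)]
        push_cast
        ring
      rw [h1, h2, Rat.floor_intCast_div_natCast, hKdef]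
      rw [Int.natCast_ediv]
    unfold Q
    rw [← hcardeq, hTcard, hfloor, my_ceil_half K]
    by_cases hdvd : p ^ r ∣ n
    · rw [if_pos hdvd, if_pos hdvd]
      have := hK1 hdvd
      have h12 : 1 ≤ (K + 1) / 2 := by omega
      omega
    · rw [if_neg hdvd, if_neg hdvd]
      omega
  · -- even case
    intro hneven
    unfold Q
    rw [Finset.card_eq_zero, Finset.filter_eq_empty_iff]
    intro c hc hmul
    obtain ⟨b, hbodd, hbpos, hble, hsub, hne, hparts⟩ :=
      hstruct c (Finset.mem_filter.mpr ⟨hc, hmul⟩)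
    have h1 : (n - M * b) % 2 = 1 := Nat.odd_iff.mp hsub
    have h2 : (M * b) % 2 = 0 := Nat.even_iff.mp (hMeven.mul_right b)
    have h3 : n % 2 = 0 := Nat.even_iff.mp hneven
    omega
end

section
/- Let r > 1 be an integer and n a positive integer. Then Q_{2^r}(n) = 0 when n is odd; and when n is even, Q_{2^r}(n) = ⌈(1/2)·⌊(n−1)/(2^r−1)⌋⌉ − ε, where ε = ⌊n/2^r⌋ mod 2 if 2^r divides n and ε = 0 otherwise. -/
lemma aux_choose_two_le {N k : ℕ} (h2 : 2 ≤ k) (hk : k ≤ N / 2) :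
    N.choose 2 ≤ N.choose k := by
  induction k with
  | zero => omega
  | succ m ih =>
    rcases Nat.lt_or_ge m 2 with h | h
    · have : m = 1 := by omega
      subst this; exact le_rfl
    · exact le_trans (ih h (by omega)) (Nat.choose_le_succ_of_lt_half_left (by omega))

lemma aux_not_choose_two_pow {N k s : ℕ} (h1 : 2 ≤ k) (h2 : k + 2 ≤ N) :
    N.choose k ≠ 2 ^ s := by
  intro h
  have hN : 4 ≤ N := by omega
  -- N.choose k ≤ N via factorization bound
  have hupp : N.choose k ≤ N := by
    have := Nat.pow_factorization_choose_le (p := 2) (n := N) (k := k) (by omega)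
    rwa [h, Nat.Prime.factorization_pow Nat.prime_two, Finsupp.single_eq_same, ← h] at this
  -- N < N.choose 2
  have hlow : N < N.choose 2 := by
    rw [Nat.choose_two_right]
    have : N + 1 ≤ N * (N - 1) / 2 := by
      rw [Nat.le_div_iff_mul_le (by norm_num : 0 < 2)]
      obtain ⟨M, rfl⟩ : ∃ M, N = M + 4 := ⟨N - 4, by omega⟩
      have e : M + 4 - 1 = M + 3 := rfl
      rw [e]; nlinarith
    omega
  have hmono : N.choose 2 ≤ N.choose k := by
    rcases le_or_gt k (N / 2) with hk | hk
    · exact aux_choose_two_le h1 hk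
    · rw [← Nat.choose_symm (by omega : k ≤ N)]
      exact aux_choose_two_le (by omega) (by omega)
  omega

lemma aux_multinomial_two_pow {s : Finset ℕ} {f : ℕ → ℕ} {r : ℕ} (hr : 2 ≤ r)
    (hf : ∀ i ∈ s, 0 < f i) (h : Nat.multinomial s f = 2 ^ r) :
    ∃ a b, a ≠ b ∧ s = {a, b} ∧ f a = 1 ∧ f b = 2 ^ r - 1 := by
  have h4 : 4 ≤ 2 ^ r := by
    calc (4 : ℕ) = 2 ^ 2 := rfl
    _ ≤ 2 ^ r := Nat.pow_le_pow_right (by norm_num) hr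
  -- key divisibility: for every a ∈ s, choose (∑ f) (f a) is a power of two
  have key : ∀ a ∈ s, ∃ i, i ≤ r ∧ (∑ j ∈ s, f j).choose (f a) = 2 ^ i := by
    intro a ha
    have hdvd : (∑ j ∈ s, f j).choose (f a) ∣ 2 ^ r := by
      rw [← h]
      have : Nat.multinomial s f =
          (f a + ∑ j ∈ s.erase a, f j).choose (f a) * Nat.multinomial (s.erase a) f := by
        conv_lhs => rw [← Finset.insert_erase ha]
        rw [Nat.multinomial_insert (Finset.notMem_erase a s)]
      rw [this, Finset.add_sum_erase _ f ha]
      exact Dvd.intro _ rfl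
    exact (Nat.dvd_prime_pow Nat.prime_two).mp hdvd
  -- lower bound on sum over erase
  have hsum_erase : ∀ a ∈ s, s.card - 1 ≤ ∑ j ∈ s.erase a, f j := by
    intro a ha
    calc s.card - 1 = (s.erase a).card := (Finset.card_erase_of_mem ha).symm
    _ = ∑ j ∈ s.erase a, 1 := by simp
    _ ≤ ∑ j ∈ s.erase a, f j :=
        Finset.sum_le_sum fun i hi => hf i (Finset.mem_of_mem_erase hi)
  rcases lt_or_ge s.card 2 with hc | hc
  · -- card ≤ 1 : multinomial = 1, contradiction
    exfalso
    interval_cases hcard : s.card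
    · rw [Finset.card_eq_zero.mp hcard] at h
      simp at h; omega
    · obtain ⟨a, rfl⟩ := Finset.card_eq_one.mp hcard
      simp at h; omega
  rcases lt_or_ge s.card 3 with hc3 | hc3
  · -- card = 2
    have hc2 : s.card = 2 := by omega
    obtain ⟨a, b, hab, rfl⟩ := Finset.card_eq_two.mp hc2
    have hfa : 0 < f a := hf a (by simp)
    have hfb : 0 < f b := hf b (by simp)
    rw [Nat.binomial_eq_choose hab] at h
    have hone : f a = 1 ∨ f b = 1 := by
      by_contra hcon
      push_neg at hcon
      exact aux_not_choose_two_pow (by omega) (by omega) h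
    rcases hone with h1 | h1
    · refine ⟨a, b, hab, rfl, h1, ?_⟩
      rw [h1, Nat.choose_one_right] at h
      omega
    · refine ⟨b, a, hab.symm, Finset.pair_comm a b, h1, ?_⟩
      rw [h1, Nat.choose_succ_self_right] at h
      omega
  · -- card ≥ 3 : contradiction
    exfalso
    have hall : ∀ a ∈ s, f a = 1 := by
      intro a ha
      obtain ⟨i, hi, hchoose⟩ := key a ha
      by_contra hne
      have hfa : 2 ≤ f a := by have := hf a ha; omega
      have hle : f a + 2 ≤ ∑ j ∈ s, f j := by
        have h1 := hsum_erase a ha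
        have h2 : ∑ j ∈ s, f j = f a + ∑ j ∈ s.erase a, f j :=
          (Finset.add_sum_erase _ f ha).symm
        omega
      exact aux_not_choose_two_pow hfa hle hchoose
    have hsum : ∑ j ∈ s, f j = s.card := by
      rw [Finset.sum_congr rfl hall]; simp
    have hmul : Nat.multinomial s f = (s.card).factorial := by
      have hspec := Nat.multinomial_spec s f
      have hprod : ∏ i ∈ s, (f i).factorial = 1 := by
        apply Finset.prod_eq_one
        intro i hi; rw [hall i hi]; rfl
      rw [hprod, one_mul, hsum] at hspec
      exact hspec
    have h3dvd : 3 ∣ 2 ^ r := by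
      rw [← h, hmul]
      exact Nat.dvd_factorial (by norm_num) hc3
    have := Nat.Prime.dvd_of_dvd_pow (p := 3) (by norm_num) h3dvd
    norm_num at this

lemma aux_parts_shape {n r : ℕ} (hr : 2 ≤ r) (c : Nat.Partition n)
    (h : partitionMultinomial c = 2 ^ r) :
    ∃ a b, a ≠ b ∧ c.parts = a ::ₘ Multiset.replicate (2 ^ r - 1) b := by
  obtain ⟨a, b, hab, hs, hfa, hfb⟩ := aux_multinomial_two_pow hr
    (fun i hi => Multiset.count_pos.mpr (Multiset.mem_toFinset.mp hi)) h
  refine ⟨a, b, hab, ?_⟩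
  ext x
  rw [Multiset.count_cons, Multiset.count_replicate]
  by_cases hxa : x = a
  · subst hxa
    rw [hfa, if_neg (fun hh => hab hh.symm), if_pos rfl]
  · by_cases hxb : x = b
    · subst hxb
      rw [hfb, if_pos rfl, if_neg hxa]
      omega
    · have hx : x ∉ c.parts := by
        intro hmem
        have : x ∈ c.parts.toFinset := Multiset.mem_toFinset.mpr hmem
        rw [hs] at this
        simp at this
        tauto
      rw [Multiset.count_eq_zero_of_notMem hx, if_neg (fun hh => hxb hh.symm), if_neg hxa]

lemma aux_shape_multinomial {n : ℕ} {a b m : ℕ} (hab : a ≠ b) (hm : 0 < m)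
    (c : Nat.Partition n) (hc : c.parts = a ::ₘ Multiset.replicate m b) :
    partitionMultinomial c = m + 1 := by
  unfold partitionMultinomial
  rw [hc]
  have hts : (a ::ₘ Multiset.replicate m b).toFinset = {a, b} := by
    rw [Multiset.toFinset_cons, Multiset.toFinset_replicate, if_neg (by omega)]
  rw [hts]
  have hfa : Multiset.count a (a ::ₘ Multiset.replicate m b) = 1 := by
    rw [Multiset.count_cons_self, Multiset.count_replicate, if_neg (fun hh => hab hh.symm)]
  have hfb : Multiset.count b (a ::ₘ Multiset.replicate m b) = m := by
    rw [Multiset.count_cons_of_ne (Ne.symm hab), Multiset.count_replicate, if_pos rfl]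
  rw [Nat.binomial_one hab hfa, hfb]

/-- Partition with parts `n - m*b` (once) and `b` (`m` times). -/
def auxPart (n m b : ℕ) (h1 : 0 < b) (h2 : m * b + 1 ≤ n) : Nat.Partition n where
  parts := (n - m * b) ::ₘ Multiset.replicate m b
  parts_pos := by
    intro i hi
    rw [Multiset.mem_cons] at hi
    rcases hi with rfl | hi
    · omega
    · rw [Multiset.eq_of_mem_replicate hi]; exact h1
  parts_sum := by
    rw [Multiset.sum_cons, Multiset.sum_replicate, smul_eq_mul]; omega

theorem Q_two_pow (n r : ℕ) (hr : 1 < r) (hn : 0 < n) :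
    (Odd n → Q (2 ^ r) n = 0) ∧
    (Even n → (Q (2 ^ r) n : ℤ) =
      ⌈(⌊((n : ℚ) - 1) / ((2 : ℚ) ^ r - 1)⌋ : ℚ) / 2⌉ -
        (if 2 ^ r ∣ n then ((n / 2 ^ r : ℕ) % 2 : ℤ) else 0)) := by
  have hr2 : 2 ≤ r := hr
  have h4 : 4 ≤ 2 ^ r := by
    calc (4 : ℕ) = 2 ^ 2 := rfl
    _ ≤ 2 ^ r := Nat.pow_le_pow_right (by norm_num) hr2
  set m : ℕ := 2 ^ r - 1 with hmdef
  have h2rm : 2 ^ r = m + 1 := by omega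
  have hm3 : 3 ≤ m := by omega
  have h2even : 2 ^ r % 2 = 0 := by
    have : (2 : ℕ) ∣ 2 ^ r := dvd_pow_self 2 (by omega)
    omega
  have hmodd : m % 2 = 1 := by omega
  have hexp : ∀ b : ℕ, 2 ^ r * b = m * b + b := by
    intro b; rw [h2rm, add_mul, one_mul]
  have hodds_mem : ∀ c : Nat.Partition n,
      c ∈ Nat.Partition.odds n ↔ ∀ i ∈ c.parts, ¬ Even i := by
    intro c; rw [Nat.Partition.odds, Nat.Partition.restricted, Finset.mem_filter]; simp
  -- forward characterisation of elements of the filter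
  have fwd : ∀ c ∈ (Nat.Partition.odds n).filter fun c => partitionMultinomial c = 2 ^ r,
      ∃ b, b % 2 = 1 ∧ (n - m * b) % 2 = 1 ∧ m * b + 1 ≤ n ∧ 2 ^ r * b ≠ n ∧
        c.parts = (n - m * b) ::ₘ Multiset.replicate m b := by
    intro c hc
    rw [Finset.mem_filter] at hc
    obtain ⟨hodds, hmul⟩ := hc
    obtain ⟨a, b, hab, hparts⟩ := aux_parts_shape hr2 c hmul
    rw [← hmdef] at hparts
    have hbmem : b ∈ c.parts := by
      rw [hparts, Multiset.mem_cons]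
      exact Or.inr (Multiset.mem_replicate.mpr ⟨by omega, rfl⟩)
    have hamem : a ∈ c.parts := by rw [hparts]; exact Multiset.mem_cons_self _ _
    have hsum : a + m * b = n := by
      have hps := c.parts_sum
      rw [hparts, Multiset.sum_cons, Multiset.sum_replicate, smul_eq_mul] at hps
      exact hps
    have hodd := (hodds_mem c).mp hodds
    have hbodd : b % 2 = 1 := Nat.not_even_iff.mp (hodd b hbmem)
    have haodd : a % 2 = 1 := Nat.not_even_iff.mp (hodd a hamem)
    have hapos : 0 < a := c.parts_pos hamem
    set q := m * b with hq
    refine ⟨b, hbodd, by omega, by omega, ?_, ?_⟩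
    · intro hcon
      rw [hexp b] at hcon
      apply hab
      omega
    · have : a = n - q := by omega
      rw [← this, hparts]
  constructor
  · -- odd case
    intro hodd_n
    have hn2 : n % 2 = 1 := Nat.odd_iff.mp hodd_n
    rw [Q, Finset.card_eq_zero]
    apply Finset.eq_empty_of_forall_notMem
    intro c hc
    obtain ⟨b, hb1, hb2, hb3, -, -⟩ := fwd c hc
    have hmb : m * b % 2 = 1 := by rw [Nat.mul_mod, hmodd, hb1]
    set q := m * b with hq
    omega
  · -- even case
    intro heven
    have hn2 : n % 2 = 0 := Nat.even_iff.mp heven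
    set M : ℕ := (n - 1) / m with hMdef
    have hble : ∀ b : ℕ, b ≤ M ↔ m * b ≤ n - 1 := by
      intro b
      rw [hMdef, Nat.le_div_iff_mul_le (by omega : 0 < m), mul_comm]
    set S0 : Finset ℕ := (Finset.range (M + 1)).filter fun b => b % 2 = 1 with hS0def
    set S : Finset ℕ := S0.filter fun b => ¬ 2 ^ r * b = n with hSdef
    have hSmem : ∀ b : ℕ, b ∈ S ↔ m * b + 1 ≤ n ∧ b % 2 = 1 ∧ 2 ^ r * b ≠ n := by
      intro b
      rw [hSdef, Finset.mem_filter, hS0def, Finset.mem_filter, Finset.mem_range]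
      have h1 := hble b
      constructor
      · rintro ⟨⟨hb1, hb2⟩, hb3⟩
        exact ⟨by omega, hb2, hb3⟩
      · rintro ⟨hb1, hb2, hb3⟩
        exact ⟨⟨by omega, hb2⟩, hb3⟩
    -- the bijection
    have hcard : ((Nat.Partition.odds n).filter fun c => partitionMultinomial c = 2 ^ r).card
        = S.card := by
      symm
      have key : ∀ b, m * b + 1 ≤ n → 2 ^ r * b ≠ n → n - m * b ≠ b := by
        intro b h1 h2 hcon
        apply h2
        rw [hexp b]
        set q := m * b with hq
        omega
      apply Finset.card_bij (fun b hb => auxPart n m b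
        (by have := (hSmem b).mp hb; omega) (by exact ((hSmem b).mp hb).1))
      · -- maps into the filter
        intro b hb
        obtain ⟨hc1, hc2, hc3⟩ := (hSmem b).mp hb
        rw [Finset.mem_filter]
        constructor
        · rw [hodds_mem]
          intro i hi
          rw [auxPart] at hi
          simp only [Multiset.mem_cons] at hi
          rw [Nat.not_even_iff]
          have hmb : m * b % 2 = 1 := by rw [Nat.mul_mod, hmodd, hc2]
          rcases hi with rfl | hi
          · set q := m * b with hq
            omega
          · rw [Multiset.eq_of_mem_replicate hi]; exact hc2
        · rw [aux_shape_multinomial (key b hc1 hc3) (by omega) _ rfl]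
          omega
      · -- injective
        intro b1 hb1 b2 hb2 heq
        obtain ⟨h11, h12, h13⟩ := (hSmem b1).mp hb1
        obtain ⟨h21, h22, h23⟩ := (hSmem b2).mp hb2
        by_contra hne
        have hp := congrArg Nat.Partition.parts heq
        rw [auxPart, auxPart] at hp
        simp only at hp
        have hA : Multiset.count b1 ((n - m * b1) ::ₘ Multiset.replicate m b1) = m := by
          rw [Multiset.count_cons_of_ne (Ne.symm (key b1 h11 h13)),
            Multiset.count_replicate_self]
        have hB : Multiset.count b1 ((n - m * b2) ::ₘ Multiset.replicate m b2) ≤ 1 := by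
          rw [Multiset.count_cons, Multiset.count_replicate, if_neg (fun hh => hne hh.symm)]
          split_ifs <;> omega
        rw [hp] at hA
        omega
      · -- surjective
        intro c hc
        obtain ⟨b, hb1, hb2, hb3, hb4, hb5⟩ := fwd c hc
        refine ⟨b, (hSmem b).mpr ⟨hb3, hb1, hb4⟩, ?_⟩
        exact Nat.Partition.ext hb5.symm
    -- counting S
    have hS0card : ∀ k : ℕ, ((Finset.range k).filter fun b => b % 2 = 1).card = k / 2 := by
      intro k
      induction k with
      | zero => simp
      | succ k ih =>
        rw [Finset.range_add_one, Finset.filter_insert]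
        by_cases hk : k % 2 = 1
        · rw [if_pos hk, Finset.card_insert_of_notMem (by simp)]
          omega
        · rw [if_neg hk, ih]
          omega
    have hsplit : (S0.filter fun b => 2 ^ r * b = n).card + S.card = S0.card := by
      rw [hSdef]
      exact Finset.card_filter_add_card_filter_not _
    have hS0c : S0.card = (M + 1) / 2 := hS0card (M + 1)
    -- value of the ceiling term
    have hfloor : ⌊((n : ℚ) - 1) / ((2 : ℚ) ^ r - 1)⌋ = (M : ℤ) := by
      have e1 : ((n : ℚ) - 1) = ((n - 1 : ℕ) : ℚ) := by
        rw [Nat.cast_sub (by omega : 1 ≤ n)]; norm_num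
      have e2 : ((2 : ℚ) ^ r - 1) = ((m : ℕ) : ℚ) := by
        rw [hmdef]
        rw [Nat.cast_sub (Nat.one_le_two_pow)]
        push_cast
        ring
      rw [e1, e2, Rat.floor_natCast_div_natCast, hMdef]
      exact (Int.natCast_div _ _).symm
    have hceil : ⌈((M : ℤ) : ℚ) / 2⌉ = (((M + 1) / 2 : ℕ) : ℤ) := by
      have hq1 : 2 * ((M + 1) / 2) ≤ M + 1 := by omega
      have hq2 : M ≤ 2 * ((M + 1) / 2) := by omega
      have hq1' : (2 * ((M + 1) / 2 : ℕ) : ℚ) ≤ (M : ℚ) + 1 := by exact_mod_cast hq1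
      have hq2' : (M : ℚ) ≤ (2 * ((M + 1) / 2 : ℕ) : ℚ) := by exact_mod_cast hq2
      rw [Int.ceil_eq_iff]
      have hcast : ((((M + 1) / 2 : ℕ) : ℤ) : ℚ) = (((M + 1) / 2 : ℕ) : ℚ) :=
        Int.cast_natCast _
      have hcast2 : (((M : ℕ) : ℤ) : ℚ) = ((M : ℕ) : ℚ) := Int.cast_natCast _
      rw [hcast, hcast2]
      push_cast at hq1' hq2'
      constructor
      · linarith
      · linarith
    rw [Q, hcard, hfloor, hceil]
    -- now resolve the epsilon and finish with arithmetic
    by_cases hdvd : 2 ^ r ∣ n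
    · rw [if_pos hdvd]
      obtain ⟨t, ht⟩ := hdvd
      have htdiv : n / 2 ^ r = t := by rw [ht, Nat.mul_div_cancel_left _ (by omega : 0 < 2 ^ r)]
      have htpos : 0 < t := by
        rcases Nat.eq_zero_or_pos t with h0 | h0
        · rw [h0, mul_zero] at ht; omega
        · exact h0
      have hexpt : 2 ^ r * t = m * t + t := hexp t
      have htM : t ≤ M := by
        rw [hble]
        set q := m * t with hq
        omega
      rw [htdiv]
      by_cases ht2 : t % 2 = 1
      · -- the excluded b exists
        have hfil : (S0.filter fun b => 2 ^ r * b = n) = {t} := by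
          ext b
          rw [Finset.mem_filter, hS0def, Finset.mem_filter, Finset.mem_range,
            Finset.mem_singleton]
          constructor
          · rintro ⟨⟨hbr, hbo⟩, hbe⟩
            have : 2 ^ r * b = 2 ^ r * t := by rw [hbe, ht]
            exact Nat.eq_of_mul_eq_mul_left (by omega) this
          · rintro rfl
            exact ⟨⟨by omega, ht2⟩, ht.symm⟩
        rw [hfil, Finset.card_singleton] at hsplit
        omega
      · -- excluded b would be even; no exclusion
        have hfil : (S0.filter fun b => 2 ^ r * b = n) = ∅ := by
          rw [Finset.filter_eq_empty_iff]
          intro b hb hbe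
          rw [hS0def, Finset.mem_filter] at hb
          have : 2 ^ r * b = 2 ^ r * t := by rw [hbe, ht]
          have hbt : b = t := Nat.eq_of_mul_eq_mul_left (by omega) this
          rw [hbt] at hb
          exact ht2 hb.2
        rw [hfil, Finset.card_empty] at hsplit
        omega
    · rw [if_neg hdvd]
      have hfil : (S0.filter fun b => 2 ^ r * b = n) = ∅ := by
        rw [Finset.filter_eq_empty_iff]
        intro b hb hbe
        exact hdvd ⟨b, hbe.symm⟩
      rw [hfil, Finset.card_empty] at hsplit
      omega
end

section
/- For all positive integers n and k, q(n) ≤ (1/k)·( F_n + ∑_{j=1}^{k−1} (k−j) Q_j(n) ). -/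
section Aux

open Multiset Finset Nat

/-- multinomial of the count function of a multiset. -/
private def M (m : Multiset ℕ) : ℕ := Nat.multinomial m.toFinset fun i => m.count i

private lemma M_prod_spec (m : Multiset ℕ) :
    (∏ i ∈ m.toFinset, (m.count i)!) * M m = (Multiset.card m)! := by
  have := Nat.multinomial_spec m.toFinset (fun i => m.count i)
  rwa [Multiset.toFinset_sum_count_eq] at this

private lemma M_rec (m : Multiset ℕ) (hm : m ≠ 0) :
    M m = ∑ a ∈ m.toFinset, M (m.erase a) := by
  have hP : 0 < ∏ i ∈ m.toFinset, (m.count i)! :=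
    Finset.prod_pos fun i _ => Nat.factorial_pos _
  apply Nat.eq_of_mul_eq_mul_left hP
  rw [M_prod_spec]
  have key : ∀ a ∈ m.toFinset,
      (∏ i ∈ m.toFinset, (m.count i)!) * M (m.erase a)
        = m.count a * (Multiset.card m - 1)! := by
    intro a ha
    have ham : a ∈ m := Multiset.mem_toFinset.1 ha
    have h1 : (∏ i ∈ m.toFinset, (m.count i)!)
        = m.count a * ∏ i ∈ (m.erase a).toFinset, ((m.erase a).count i)! := by
      have h2 : ∏ i ∈ (m.erase a).toFinset, ((m.erase a).count i)!
          = ∏ i ∈ m.toFinset, ((m.erase a).count i)! := by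
        apply Finset.prod_subset
        · intro x hx
          exact Multiset.mem_toFinset.2 (Multiset.mem_of_mem_erase (Multiset.mem_toFinset.1 hx))
        · intro x _ hx
          rw [Multiset.count_eq_zero_of_notMem (fun h => hx (Multiset.mem_toFinset.2 h))]
          rfl
      rw [h2, ← Finset.mul_prod_erase _ (fun i => (m.count i)!) ha,
        ← Finset.mul_prod_erase _ (fun i => ((m.erase a).count i)!) ha, ← mul_assoc]
      congr 1
      · rw [Multiset.count_erase_self]
        exact (Nat.mul_factorial_pred (Multiset.count_pos.2 ham).ne').symm
      · apply Finset.prod_congr rfl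
        intro x hx
        rw [Multiset.count_erase_of_ne (Finset.mem_erase.1 hx).1]
    rw [h1, mul_assoc, M_prod_spec, Multiset.card_erase_of_mem ham]
    rfl
  rw [Finset.mul_sum, Finset.sum_congr rfl key, ← Finset.sum_mul,
    Multiset.toFinset_sum_count_eq]
  exact (Nat.mul_factorial_pred (Multiset.card_pos.mpr hm).ne').symm

/-- the total sum of multinomials over odd partitions. -/
private def g (n : ℕ) : ℕ := ∑ c ∈ Nat.Partition.odds n, M c.parts

private lemma mem_odds_iff {n : ℕ} (c : n.Partition) :
    c ∈ Nat.Partition.odds n ↔ ∀ i ∈ c.parts, ¬ Even i := by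
  rw [Nat.Partition.odds, Nat.Partition.restricted, Finset.mem_filter]
  simp

private lemma g_zero : g 0 = 1 := by
  have h1 : Nat.Partition.odds 0 = Finset.univ := by
    apply Finset.filter_true_of_mem
    intro c _
    simp [Nat.Partition.partition_zero_parts]
  rw [g, h1]
  rw [Finset.sum_congr rfl (fun c _ => by rw [Nat.Partition.partition_zero_parts c])]
  simp [M, Finset.card_univ]

private lemma g_rec (n : ℕ) (hn : 0 < n) :
    g n = ∑ a ∈ (Finset.Icc 1 n).filter (fun a => ¬ Even a), g (n - a) := by
  rw [g]
  have hstep : ∀ c ∈ Nat.Partition.odds n,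
      M c.parts = ∑ a ∈ c.parts.toFinset, M (c.parts.erase a) := by
    intro c _
    apply M_rec
    intro h
    have := c.parts_sum
    rw [h] at this
    simp at this
    omega
  rw [Finset.sum_congr rfl hstep]
  rw [Finset.sum_comm' (t' := (Finset.Icc 1 n).filter (fun a => ¬ Even a))
    (s' := fun a => (Nat.Partition.odds n).filter (fun c => a ∈ c.parts))]
  · apply Finset.sum_congr rfl
    intro a ha
    rw [Finset.mem_filter, Finset.mem_Icc] at ha
    obtain ⟨⟨ha1, han⟩, hodd⟩ := ha
    rw [g]
    apply Finset.sum_bij'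
      (i := fun c hc => (⟨c.parts.erase a,
        fun {i} hi => c.parts_pos (Multiset.mem_of_mem_erase hi), by
          have haP : a ∈ c.parts := (Finset.mem_filter.1 hc).2
          have h2 : a + (c.parts.erase a).sum = n := by
            rw [← Multiset.sum_cons, Multiset.cons_erase haP, c.parts_sum]
          omega⟩ : (n - a).Partition))
      (j := fun c' _ => (⟨a ::ₘ c'.parts,
        fun {i} hi => by
          rcases Multiset.mem_cons.1 hi with h | h
          · omega
          · exact c'.parts_pos h, by
          rw [Multiset.sum_cons, c'.parts_sum]
          omega⟩ : n.Partition))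
    case hi =>
      intro c hc
      rw [mem_odds_iff]
      intro i hi
      exact (mem_odds_iff c).1 (Finset.mem_filter.1 hc).1 i (Multiset.mem_of_mem_erase hi)
    case hj =>
      intro c' hc'
      rw [Finset.mem_filter, mem_odds_iff]
      refine ⟨fun i hi => ?_, Multiset.mem_cons_self a _⟩
      rcases Multiset.mem_cons.1 hi with h | h
      · rw [h]; exact hodd
      · exact (mem_odds_iff c').1 hc' i h
    case left_neg =>
      intro c hc
      apply Nat.Partition.ext
      exact Multiset.cons_erase (Finset.mem_filter.1 hc).2
    case right_neg =>
      intro c' hc'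
      apply Nat.Partition.ext
      exact Multiset.erase_cons_head a _
    case h =>
      intro c hc
      rfl
  · intro c a
    constructor
    · rintro ⟨hc, ha⟩
      have haP : a ∈ c.parts := Multiset.mem_toFinset.1 ha
      refine ⟨Finset.mem_filter.2 ⟨hc, haP⟩, Finset.mem_filter.2 ⟨Finset.mem_Icc.2
        ⟨c.parts_pos haP, ?_⟩, (mem_odds_iff c).1 hc a haP⟩⟩
      rw [← c.parts_sum]
      exact Multiset.le_sum_of_mem haP
    · rintro ⟨hc, _⟩
      obtain ⟨hc1, hc2⟩ := Finset.mem_filter.1 hc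
      exact ⟨hc1, Multiset.mem_toFinset.2 hc2⟩

private lemma g_le_fib : ∀ n, 0 < n → g n ≤ Nat.fib n := by
  intro n
  induction n using Nat.strong_induction_on with
  | _ n ih =>
    intro hn
    by_cases h3 : n < 3
    · interval_cases n
      · rw [g_rec 1 one_pos]
        have h : (Finset.Icc 1 1).filter (fun a => ¬ Even a) = {1} := by decide
        rw [h, Finset.sum_singleton]
        simp [g_zero]
      · rw [g_rec 2 two_pos]
        have h : (Finset.Icc 1 2).filter (fun a => ¬ Even a) = {1} := by decide
        rw [h, Finset.sum_singleton]
        calc g (2 - 1) ≤ Nat.fib 1 := ih 1 (by omega) one_pos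
          _ = Nat.fib 2 := by simp
    · have h1 : 1 ∈ (Finset.Icc 1 n).filter (fun a => ¬ Even a) := by
        rw [Finset.mem_filter, Finset.mem_Icc, Nat.not_even_iff]
        omega
      rw [g_rec n hn, ← Finset.add_sum_erase _ _ h1]
      have hre : ∑ a ∈ ((Finset.Icc 1 n).filter (fun a => ¬ Even a)).erase 1, g (n - a)
          = g (n - 2) := by
        rw [g_rec (n - 2) (by omega)]
        apply Finset.sum_nbij' (i := fun a => a - 2) (j := fun b => b + 2)
        case hi =>
          intro a ha
          simp only [Finset.mem_erase, Finset.mem_filter, Finset.mem_Icc,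
            Nat.not_even_iff] at *
          omega
        case hj =>
          intro b hb
          simp only [Finset.mem_erase, Finset.mem_filter, Finset.mem_Icc,
            Nat.not_even_iff] at *
          omega
        case left_neg =>
          intro a ha
          simp only [Finset.mem_erase, Finset.mem_filter, Finset.mem_Icc,
            Nat.not_even_iff] at ha
          omega
        case right_neg =>
          intro b _
          omega
        case h =>
          intro a ha
          simp only [Finset.mem_erase, Finset.mem_filter, Finset.mem_Icc,
            Nat.not_even_iff] at ha
          congr 1
          omega
      rw [hre]
      have e1 : g (n - 1) ≤ Nat.fib (n - 1) := ih (n - 1) (by omega) (by omega)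
      have e2 : g (n - 2) ≤ Nat.fib (n - 2) := ih (n - 2) (by omega) (by omega)
      have hf : Nat.fib n = Nat.fib (n - 2) + Nat.fib (n - 1) := by
        have h := Nat.fib_add_two (n := n - 2)
        have h2 : n - 2 + 2 = n := by omega
        have h1' : n - 2 + 1 = n - 1 := by omega
        rw [h2, h1'] at h
        exact h
      omega

private lemma key_nat (n k : ℕ) (hk : 0 < k) :
    k * q n ≤ g n + ∑ j ∈ Finset.Icc 1 (k - 1), (k - j) * Q j n := by
  have hM : ∀ c : n.Partition, partitionMultinomial c = M c.parts := fun _ => rfl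
  have pointwise : ∀ c ∈ Nat.Partition.odds n,
      k ≤ M c.parts + ∑ j ∈ Finset.Icc 1 (k - 1),
        (k - j) * (if partitionMultinomial c = j then 1 else 0) := by
    intro c _
    set m := M c.parts with hm
    have hm1 : 1 ≤ m := Nat.multinomial_pos _ _
    by_cases hmk : k ≤ m
    · omega
    · have hmem : m ∈ Finset.Icc 1 (k - 1) := Finset.mem_Icc.2 ⟨hm1, by omega⟩
      have hsingle : (k - m) * (if partitionMultinomial c = m then 1 else 0)
          ≤ ∑ j ∈ Finset.Icc 1 (k - 1),
            (k - j) * (if partitionMultinomial c = j then 1 else 0) :=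
        Finset.single_le_sum (f := fun j => (k - j) * if partitionMultinomial c = j then 1 else 0)
          (fun j _ => Nat.zero_le _) hmem
      rw [if_pos (show partitionMultinomial c = m from hM c), mul_one] at hsingle
      omega
  have h1 : k * q n = ∑ _c ∈ Nat.Partition.odds n, k := by
    rw [Finset.sum_const, smul_eq_mul, mul_comm, q]
  rw [h1]
  calc ∑ _c ∈ Nat.Partition.odds n, k
      ≤ ∑ c ∈ Nat.Partition.odds n, (M c.parts + ∑ j ∈ Finset.Icc 1 (k - 1),
          (k - j) * (if partitionMultinomial c = j then 1 else 0)) :=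
        Finset.sum_le_sum pointwise
    _ = g n + ∑ j ∈ Finset.Icc 1 (k - 1), (k - j) * Q j n := by
        rw [Finset.sum_add_distrib]
        congr 1
        rw [Finset.sum_comm]
        apply Finset.sum_congr rfl
        intro j _
        rw [← Finset.mul_sum, Q]
        congr 1
        exact (Finset.card_filter _ _).symm

end Aux

theorem q_le_fib_add_sum_Q (n k : ℕ) (hn : 0 < n) (hk : 0 < k) :
    (q n : ℝ) ≤ (1 / (k : ℝ)) *
      ((Nat.fib n : ℝ) + ∑ j ∈ Finset.Icc 1 (k - 1), ((k : ℝ) - (j : ℝ)) * (Q j n : ℝ)) := by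
  have hN : k * q n ≤ Nat.fib n + ∑ j ∈ Finset.Icc 1 (k - 1), (k - j) * Q j n := by
    calc k * q n ≤ g n + ∑ j ∈ Finset.Icc 1 (k - 1), (k - j) * Q j n := key_nat n k hk
      _ ≤ Nat.fib n + ∑ j ∈ Finset.Icc 1 (k - 1), (k - j) * Q j n := by
          have := g_le_fib n hn
          omega
  have hk' : (0 : ℝ) < (k : ℝ) := by exact_mod_cast hk
  rw [one_div, inv_mul_eq_div, le_div_iff₀ hk']
  have hsum : ∑ j ∈ Finset.Icc 1 (k - 1), ((k : ℝ) - (j : ℝ)) * (Q j n : ℝ)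
      = ((∑ j ∈ Finset.Icc 1 (k - 1), (k - j) * Q j n : ℕ) : ℝ) := by
    push_cast
    apply Finset.sum_congr rfl
    intro j hj
    rw [Finset.mem_Icc] at hj
    rw [Nat.cast_sub (by omega)]
  rw [hsum]
  rw [mul_comm]
  exact_mod_cast hN
end

section
/- For every real x with 0 < x < 1, 1 + ∑_{n=1}^∞ x^n/(1−x^{2n}) < ∏_{n=1}^∞ (1+x^n). -/
open Real

lemma myHasProdExp {f : ℕ → ℝ} (h0 : ∀ n, 0 < f n) (h : Summable fun n => Real.log (f n)) :
    HasProd f (Real.exp (∑' n, Real.log (f n))) := by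
  have he : (rexp ∘ fun n => Real.log (f n)) = f := funext fun n => exp_log (h0 n)
  have := h.hasSum.rexp
  rwa [he] at this

lemma myProdPos {f : ℕ → ℝ} (h0 : ∀ n, 0 < f n) (h : Summable fun n => Real.log (f n)) :
    Multipliable f ∧ 0 < ∏' n, f n := by
  have hp := myHasProdExp h0 h
  exact ⟨⟨_, hp⟩, by rw [hp.tprod_eq]; exact exp_pos _⟩

lemma mySummableLogOneAdd {g : ℕ → ℝ} (h0 : ∀ n, 0 ≤ g n) (hs : Summable g) :
    Summable fun n => Real.log (1 + g n) := by
  refine hs.of_nonneg_of_le (fun n => log_nonneg (by linarith [h0 n])) (fun n => ?_)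
  have := log_le_sub_one_of_pos (show (0:ℝ) < 1 + g n by linarith [h0 n])
  linarith

lemma mySummableLogOneSub {g : ℕ → ℝ} {c : ℝ} (h0 : ∀ n, 0 ≤ g n) (hc : ∀ n, g n ≤ c)
    (hc1 : c < 1) (hs : Summable g) :
    Summable fun n => Real.log (1 - g n) := by
  have hg1 : ∀ n, 0 < 1 - g n := fun n => by linarith [hc n]
  refine Summable.of_abs ?_
  refine (hs.mul_right (1 - c)⁻¹).of_nonneg_of_le (fun n => abs_nonneg _) (fun n => ?_)
  rw [abs_of_nonpos (log_nonpos (by linarith [hg1 n]) (by linarith [h0 n]))]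
  have h1 : -Real.log (1 - g n) = Real.log (1 - g n)⁻¹ := (Real.log_inv _).symm
  have h2 : Real.log (1 - g n)⁻¹ ≤ (1 - g n)⁻¹ - 1 :=
    log_le_sub_one_of_pos (inv_pos.2 (hg1 n))
  have h3 : (1 - g n)⁻¹ - 1 = g n / (1 - g n) := by
    rw [eq_div_iff (hg1 n).ne', sub_mul, inv_mul_cancel₀ (hg1 n).ne']; ring
  have h4 : g n / (1 - g n) ≤ g n * (1 - c)⁻¹ := by
    rw [div_eq_mul_inv]
    exact mul_le_mul_of_nonneg_left (by
      apply inv_anti₀ (by linarith)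
      linarith [hc n]) (h0 n)
  linarith

lemma myFinProd {g : ℕ → ℝ} (h0 : ∀ n, 0 ≤ g n) (N : ℕ) :
    1 + ∑ i ∈ Finset.range N, g i ≤ ∏ i ∈ Finset.range N, (1 + g i) := by
  induction N with
  | zero => simp
  | succ N ih =>
    rw [Finset.sum_range_succ, Finset.prod_range_succ]
    have hS : 0 ≤ ∑ i ∈ Finset.range N, g i := Finset.sum_nonneg fun i _ => h0 i
    nlinarith [h0 N]

lemma myOneAddTsumLeTprod {g : ℕ → ℝ} (h0 : ∀ n, 0 ≤ g n) (hs : Summable g)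
    (hm : Multipliable fun n => 1 + g n) :
    1 + ∑' n, g n ≤ ∏' n, (1 + g n) := by
  refine le_of_tendsto_of_tendsto' (tendsto_const_nhds.add hs.hasSum.tendsto_sum_nat)
    hm.hasProd.tendsto_prod_nat (fun N => myFinProd h0 N)

set_option maxHeartbeats 1000000 in
theorem odd_divisors_lt_distinct_parts (x : ℝ) (hx0 : 0 < x) (hx1 : x < 1) :
    1 + ∑' n : ℕ, x ^ (n + 1) / (1 - x ^ (2 * (n + 1))) <
      ∏' n : ℕ, (1 + x ^ (n + 1)) := by
  have hxpow : ∀ m : ℕ, 0 < x ^ m := fun m => pow_pos hx0 m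
  have hxle : ∀ m : ℕ, m ≠ 0 → x ^ m ≤ x := fun m hm => pow_le_of_le_one hx0.le hx1.le hm
  have hxlt1 : ∀ m : ℕ, m ≠ 0 → x ^ m < 1 := fun m hm => lt_of_le_of_lt (hxle m hm) hx1
  have hden : ∀ m : ℕ, m ≠ 0 → (0:ℝ) < 1 - x ^ m := fun m hm => by linarith [hxlt1 m hm]
  -- basic summability
  have hgeo : Summable fun n : ℕ => x ^ n := summable_geometric_of_lt_one hx0.le hx1
  have hs1 : Summable fun n : ℕ => x ^ (n + 1) := (summable_nat_add_iff 1).2 hgeo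
  have hsodd : Summable fun k : ℕ => x ^ (2 * k + 1) := by
    have h2 : x ^ 2 < 1 := hxlt1 2 (by norm_num)
    have := (summable_geometric_of_lt_one (by positivity) h2).mul_left x
    exact this.congr fun k => by rw [← pow_mul]; ring
  have hse : Summable fun n : ℕ => x ^ (2 * (n + 1)) :=
    hs1.of_nonneg_of_le (fun n => (hxpow _).le)
      (fun n => pow_le_pow_of_le_one hx0.le hx1.le (by omega))
  set a : ℕ → ℝ := fun k => x ^ (2 * k + 1) / (1 - x ^ (2 * k + 1)) with ha
  have ha_pos : ∀ k, 0 < a k := fun k => div_pos (hxpow _) (hden _ (by omega))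
  have hsa : Summable a := by
    refine (hsodd.mul_right (1 - x)⁻¹).of_nonneg_of_le (fun k => (ha_pos k).le) (fun k => ?_)
    simp only [ha]
    rw [div_eq_mul_inv]
    refine mul_le_mul_of_nonneg_left (inv_anti₀ (by linarith) ?_) (hxpow _).le
    linarith [hxle (2 * k + 1) (by omega)]
  -- sum identity : LHS sum = ∑' a
  have hsum_eq : (∑' n : ℕ, x ^ (n + 1) / (1 - x ^ (2 * (n + 1)))) = ∑' k, a k := by
    have hFeq : ∀ n k : ℕ, x ^ ((n + 1) * (2 * k + 1)) = x ^ (n + 1) * (x ^ (2 * (n + 1))) ^ k :=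
      fun n k => by rw [← pow_mul, ← pow_add]; congr 1; ring
    have hFeq2 : ∀ k n : ℕ, x ^ ((n + 1) * (2 * k + 1)) = x ^ (2 * k + 1) * (x ^ (2 * k + 1)) ^ n :=
      fun k n => by rw [← pow_mul, ← pow_add]; congr 1; ring
    have hr : ∀ n : ℕ, x ^ (2 * (n + 1)) < 1 := fun n => hxlt1 _ (by omega)
    have hrowS : ∀ n : ℕ, Summable fun k => x ^ ((n + 1) * (2 * k + 1)) := fun n => by
      simp only [hFeq]
      exact (summable_geometric_of_lt_one (by positivity) (hr n)).mul_left _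
    have hrowsum : ∀ n : ℕ, (∑' k : ℕ, x ^ ((n + 1) * (2 * k + 1)))
        = x ^ (n + 1) / (1 - x ^ (2 * (n + 1))) := fun n => by
      simp only [hFeq]
      rw [tsum_mul_left, tsum_geometric_of_lt_one (by positivity) (hr n), div_eq_mul_inv]
    have hcolsum : ∀ k : ℕ, (∑' n : ℕ, x ^ ((n + 1) * (2 * k + 1))) = a k := fun k => by
      simp only [hFeq2]
      rw [tsum_mul_left, tsum_geometric_of_lt_one (hxpow _).le (hxlt1 _ (by omega))]
      simp only [ha]
      rw [div_eq_mul_inv]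
    have hFS : Summable (Function.uncurry fun n k : ℕ => x ^ ((n + 1) * (2 * k + 1))) := by
      refine (summable_prod_of_nonneg fun p => (hxpow _).le).2 ⟨fun n => hrowS n, ?_⟩
      simp only [hrowsum]
      refine (hs1.mul_right (1 - x ^ 2)⁻¹).of_nonneg_of_le
        (fun n => (div_pos (hxpow _) (hden _ (by omega))).le) (fun n => ?_)
      rw [div_eq_mul_inv]
      refine mul_le_mul_of_nonneg_left (inv_anti₀ (hden 2 (by norm_num)) ?_) (hxpow _).le
      have : x ^ (2 * (n + 1)) ≤ x ^ 2 := pow_le_pow_of_le_one hx0.le hx1.le (by omega)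
      linarith
    calc (∑' n : ℕ, x ^ (n + 1) / (1 - x ^ (2 * (n + 1))))
        = ∑' (n : ℕ) (k : ℕ), x ^ ((n + 1) * (2 * k + 1)) :=
          tsum_congr fun n => (hrowsum n).symm
      _ = ∑' (k : ℕ) (n : ℕ), x ^ ((n + 1) * (2 * k + 1)) := (Summable.tsum_comm (f := fun n k : ℕ => x ^ ((n + 1) * (2 * k + 1))) hFS).symm
      _ = ∑' k, a k := tsum_congr hcolsum
  -- multipliability and positivity of products
  obtain ⟨hPm, hPpos⟩ := myProdPos (f := fun n => 1 + x ^ (n + 1))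
    (fun n => by show (0:ℝ) < 1 + x ^ (n + 1); linarith [hxpow (n + 1)])
    (mySummableLogOneAdd (fun n => (hxpow _).le) hs1)
  obtain ⟨hQm, hQpos⟩ := myProdPos (f := fun n => 1 - x ^ (n + 1))
    (fun n => hden _ n.succ_ne_zero)
    (mySummableLogOneSub (fun n => (hxpow _).le) (fun n => hxle _ n.succ_ne_zero) hx1 hs1)
  obtain ⟨hQem, hQepos⟩ := myProdPos (f := fun n => 1 - x ^ (2 * (n + 1)))
    (fun n => hden _ (by omega))
    (mySummableLogOneSub (fun n => (hxpow _).le) (fun n => hxle _ (by omega)) hx1 hse)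
  obtain ⟨hQom, hQopos⟩ := myProdPos (f := fun k => 1 - x ^ (2 * k + 1))
    (fun k => hden _ (by omega))
    (mySummableLogOneSub (fun k => (hxpow _).le) (fun k => hxle _ (by omega)) hx1 hsodd)
  obtain ⟨hRm, hRpos⟩ := myProdPos (f := fun k => 1 + a k)
    (fun k => by show (0:ℝ) < 1 + a k; linarith [ha_pos k])
    (mySummableLogOneAdd (fun k => (ha_pos k).le) hsa)
  have hsa1 : Summable fun k => a (k + 1) := (summable_nat_add_iff 1).2 hsa
  obtain ⟨hR1m, _⟩ := myProdPos (f := fun k => 1 + a (k + 1))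
    (fun k => by show (0:ℝ) < 1 + a (k + 1); linarith [ha_pos (k + 1)])
    (mySummableLogOneAdd (fun k => (ha_pos (k + 1)).le) hsa1)
  -- product identities
  have hPQ : (∏' n, (1 + x ^ (n + 1))) * (∏' n, (1 - x ^ (n + 1)))
      = ∏' n, (1 - x ^ (2 * (n + 1))) := by
    rw [← Multipliable.tprod_mul hPm hQm]
    refine tprod_congr fun n => ?_
    have h2 : x ^ (2 * (n + 1)) = x ^ (n + 1) * x ^ (n + 1) := by
      rw [← pow_add]; congr 1; ring
    rw [h2]; ring
  have hsplit : (∏' n, (1 - x ^ (n + 1)))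
      = (∏' k, (1 - x ^ (2 * k + 1))) * (∏' k, (1 - x ^ (2 * (k + 1)))) := by
    have ho : Multipliable fun k : ℕ => 1 - x ^ (2 * k + 1 + 1) :=
      hQem.congr fun k => by have h : 2 * (k + 1) = 2 * k + 1 + 1 := by ring
                             simp only [h]
    rw [← tprod_even_mul_odd (f := fun n => 1 - x ^ (n + 1)) hQom ho]
    congr 1
  have hQoR : (∏' k, (1 - x ^ (2 * k + 1))) * (∏' k, (1 + a k)) = 1 := by
    rw [← Multipliable.tprod_mul hQom hRm]
    have : ∀ k : ℕ, (1 - x ^ (2 * k + 1)) * (1 + a k) = 1 := fun k => by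
      have h := (hden (2 * k + 1) (by omega)).ne'
      simp only [ha]
      field_simp
      ring
    rw [tprod_congr this, tprod_one]
  -- P = R
  have hPR : (∏' n, (1 + x ^ (n + 1))) = ∏' k, (1 + a k) := by
    have h1 : (∏' n, (1 + x ^ (n + 1))) * (∏' k, (1 - x ^ (2 * k + 1))) = 1 := by
      have h := hPQ
      rw [hsplit] at h
      apply mul_right_cancel₀ hQepos.ne'
      rw [one_mul, mul_assoc]
      exact h
    calc (∏' n, (1 + x ^ (n + 1)))
        = (∏' n, (1 + x ^ (n + 1))) * ((∏' k, (1 - x ^ (2 * k + 1))) * (∏' k, (1 + a k))) := by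
          rw [hQoR, mul_one]
      _ = ((∏' n, (1 + x ^ (n + 1))) * (∏' k, (1 - x ^ (2 * k + 1)))) * (∏' k, (1 + a k)) := by
          ring
      _ = ∏' k, (1 + a k) := by rw [h1, one_mul]
  -- final inequality
  rw [hsum_eq, hPR]
  have hsplitR : (∏' k, (1 + a k)) = (1 + a 0) * ∏' k, (1 + a (k + 1)) :=
    tprod_eq_zero_mul' hR1m
  have hT : 1 + ∑' k, a (k + 1) ≤ ∏' k, (1 + a (k + 1)) :=
    myOneAddTsumLeTprod (fun k => (ha_pos _).le) hsa1 hR1m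
  have hsumsplit : (∑' k, a k) = a 0 + ∑' k, a (k + 1) := Summable.tsum_eq_zero_add hsa
  have hTpos : 0 < ∑' k, a (k + 1) :=
    lt_of_lt_of_le (ha_pos 1) (Summable.le_tsum hsa1 0 fun j _ => (ha_pos _).le)
  rw [hsumsplit, hsplitR]
  nlinarith [ha_pos 0, hTpos, hT]
end

section
/- The following double inequality holds: 1 + ∑_{n=1}^∞ 4^n/(4^{2n}−1) < ∏_{n=1}^∞ (1 + 1/4^n) < 15/11. -/
open Real Finset

private lemma quarter_pos (n : ℕ) : (0:ℝ) < 1 + 1 / (4:ℝ) ^ (n + 1) := by positivity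

private lemma log_summable : Summable (fun n : ℕ => Real.log (1 + 1 / (4:ℝ) ^ (n + 1))) := by
  apply Summable.of_nonneg_of_le
    (fun n => Real.log_nonneg (le_add_of_nonneg_right (by positivity)))
    (fun n => ?_)
    (((summable_geometric_of_lt_one (by norm_num) (by norm_num : (1/4:ℝ) < 1)).mul_left
      (1/4)).congr (fun n => by rw [← pow_succ']))
  calc Real.log (1 + 1 / (4:ℝ) ^ (n + 1)) ≤ (1 + 1 / (4:ℝ) ^ (n + 1)) - 1 :=
        Real.log_le_sub_one_of_pos (quarter_pos n)
    _ = 1 / (4:ℝ) ^ (n + 1) := by ring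
    _ = (1/4:ℝ) ^ (n + 1) := by rw [div_pow, one_pow]

private lemma prod_eq_exp :
    (∏' n : ℕ, (1 + 1 / (4:ℝ) ^ (n + 1))) =
      Real.exp (∑' n : ℕ, Real.log (1 + 1 / (4:ℝ) ^ (n + 1))) := by
  have := Real.rexp_tsum_eq_tprod (f := fun n => 1 + 1 / (4:ℝ) ^ (n + 1))
    (fun n => quarter_pos n) log_summable
  exact this.symm

private lemma term_nonneg (n : ℕ) : (0:ℝ) ≤ (4:ℝ) ^ (n+1) / ((4:ℝ) ^ (2 * (n+1)) - 1) := by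
  apply div_nonneg (by positivity)
  have hx : (4:ℝ) ≤ (4:ℝ) ^ (n+1) := le_self_pow₀ (by norm_num) (Nat.succ_ne_zero n)
  have hsq : (4:ℝ) ^ (2 * (n+1)) = ((4:ℝ) ^ (n+1))^2 := by rw [two_mul, pow_add, sq]
  nlinarith

private lemma term_le (n : ℕ) :
    (4:ℝ) ^ (n+1) / ((4:ℝ) ^ (2 * (n+1)) - 1) ≤ (16/15) * (1/4:ℝ) ^ (n+1) := by
  have hx : (4:ℝ) ≤ (4:ℝ) ^ (n+1) := le_self_pow₀ (by norm_num) (Nat.succ_ne_zero n)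
  have hxpos : (0:ℝ) < (4:ℝ) ^ (n+1) := by positivity
  have hsq : (4:ℝ) ^ (2 * (n+1)) = ((4:ℝ) ^ (n+1))^2 := by
    rw [two_mul, pow_add, sq]
  have hinv : (1/4:ℝ) ^ (n+1) = ((4:ℝ) ^ (n+1))⁻¹ := by
    rw [div_pow, one_pow, one_div]
  rw [hsq, hinv]
  rw [div_le_iff₀ (by nlinarith)]
  have h16 : (16:ℝ) ≤ ((4:ℝ) ^ (n+1))^2 := by nlinarith
  have : (16/15) * ((4:ℝ) ^ (n+1))⁻¹ * (((4:ℝ) ^ (n+1))^2 - 1)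
      = (16/15) * (((4:ℝ) ^ (n+1)) - ((4:ℝ) ^ (n+1))⁻¹) := by
    field_simp
  rw [this]
  have hinvle : ((4:ℝ) ^ (n+1))⁻¹ ≤ 1/4 := by
    rw [inv_le_comm₀ hxpos (by norm_num)]; linarith
  nlinarith

private lemma geom_summable : Summable (fun n : ℕ => (16/15) * (1/4:ℝ) ^ (n+1)) := by
  exact ((summable_geometric_of_lt_one (by norm_num) (by norm_num : (1/4:ℝ) < 1)).mul_left
    _).comp_injective (add_left_injective 1)

private lemma sum_summable :
    Summable (fun n : ℕ => (4:ℝ) ^ (n+1) / ((4:ℝ) ^ (2 * (n+1)) - 1)) :=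
  Summable.of_nonneg_of_le term_nonneg term_le geom_summable

theorem double_ineq_quarter :
    1 + ∑' n : ℕ, (4 : ℝ) ^ (n + 1) / ((4 : ℝ) ^ (2 * (n + 1)) - 1) <
      ∏' n : ℕ, (1 + 1 / (4 : ℝ) ^ (n + 1)) ∧
    ∏' n : ℕ, (1 + 1 / (4 : ℝ) ^ (n + 1)) < 15 / 11 := by
  set f : ℕ → ℝ := fun n => (4:ℝ) ^ (n+1) / ((4:ℝ) ^ (2 * (n+1)) - 1) with hf
  set g : ℕ → ℝ := fun n => Real.log (1 + 1 / (4:ℝ) ^ (n+1)) with hg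
  -- sum upper bound
  have hsum_le : (∑' n, f n) ≤ 807/2295 := by
    have hsplit := Summable.sum_add_tsum_nat_add 2 sum_summable
    have htail : (∑' n, f (n + 2)) ≤ 1/45 := by
      have hle : ∀ n : ℕ, f (n + 2) ≤ (16/15) * (1/4:ℝ)^3 * (1/4:ℝ) ^ n := by
        intro n
        calc f (n + 2) ≤ (16/15) * (1/4:ℝ) ^ (n + 3) := term_le (n + 2)
          _ = (16/15) * (1/4:ℝ)^3 * (1/4:ℝ) ^ n := by ring
      have hsummg : Summable (fun n : ℕ => (16/15) * (1/4:ℝ)^3 * (1/4:ℝ) ^ n) :=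
        (summable_geometric_of_lt_one (by norm_num) (by norm_num)).mul_left _
      calc (∑' n, f (n + 2)) ≤ ∑' n : ℕ, (16/15) * (1/4:ℝ)^3 * (1/4:ℝ) ^ n :=
            Summable.tsum_le_tsum hle ((summable_nat_add_iff 2).2 sum_summable) hsummg
        _ = (16/15) * (1/4:ℝ)^3 * (1 - 1/4)⁻¹ := by
            rw [tsum_mul_left, tsum_geometric_of_lt_one (by norm_num) (by norm_num)]
        _ = 1/45 := by norm_num
    have h01 : f 0 + f 1 = ∑ i ∈ range 2, f i := by
      rw [Finset.sum_range_succ, Finset.sum_range_one]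
    have hf0 : f 0 = 4/15 := by simp [hf]; norm_num
    have hf1 : f 1 = 16/255 := by simp [hf]; norm_num
    have : (∑' n, f n) = ∑ i ∈ range 2, f i + ∑' n, f (n + 2) := hsplit.symm
    rw [this, ← h01, hf0, hf1]
    linarith
  -- product = exp of log sum
  have hPexp := prod_eq_exp
  have hglog : Summable g := log_summable
  constructor
  · -- lower bound
    have hsplit4 := Summable.sum_add_tsum_nat_add 4 hglog
    have htailpos : 0 < ∑' n, g (n + 4) := by
      refine Summable.tsum_pos ((summable_nat_add_iff 4).2 hglog)
        (fun n => Real.log_nonneg (le_add_of_nonneg_right (by positivity))) 0 ?_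
      exact Real.log_pos (by norm_num)
    have hgsum : (∑ i ∈ range 4, g i) < ∑' n, g n := by
      rw [← hsplit4]; linarith
    have hexp4 : Real.exp (∑ i ∈ range 4, g i) = ∏ i ∈ range 4, (1 + 1 / (4:ℝ) ^ (i+1)) := by
      rw [Real.exp_sum]
      exact Finset.prod_congr rfl (fun i _ => Real.exp_log (quarter_pos i))
    have hprod4 : (∏ i ∈ range 4, (1 + 1 / (4:ℝ) ^ (i+1))) = 1419925/1048576 := by
      rw [Finset.prod_range_succ, Finset.prod_range_succ, Finset.prod_range_succ,
        Finset.prod_range_one]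
      norm_num
    calc 1 + ∑' n, f n ≤ 1 + 807/2295 := by linarith
      _ < 1419925/1048576 := by norm_num
      _ = Real.exp (∑ i ∈ range 4, g i) := by rw [hexp4, hprod4]
      _ < Real.exp (∑' n, g n) := Real.exp_lt_exp.2 hgsum
      _ = ∏' n : ℕ, (1 + 1 / (4:ℝ) ^ (n+1)) := hPexp.symm
  · -- upper bound
    have hsplit2 := Summable.sum_add_tsum_nat_add 2 hglog
    have htail : (∑' n, g (n + 2)) ≤ 1/48 := by
      have hle : ∀ n : ℕ, g (n + 2) ≤ (1/4:ℝ)^3 * (1/4:ℝ) ^ n := by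
        intro n
        calc g (n + 2) ≤ (1 + 1 / (4:ℝ) ^ (n + 3)) - 1 :=
              Real.log_le_sub_one_of_pos (quarter_pos (n + 2))
          _ = 1 / (4:ℝ) ^ (n + 3) := by ring
          _ = (1/4:ℝ) ^ (n + 3) := by rw [div_pow, one_pow]
          _ = (1/4:ℝ)^3 * (1/4:ℝ) ^ n := by ring
      have hsummg : Summable (fun n : ℕ => (1/4:ℝ)^3 * (1/4:ℝ) ^ n) :=
        (summable_geometric_of_lt_one (by norm_num) (by norm_num)).mul_left _
      calc (∑' n, g (n + 2)) ≤ ∑' n : ℕ, (1/4:ℝ)^3 * (1/4:ℝ) ^ n :=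
            Summable.tsum_le_tsum hle ((summable_nat_add_iff 2).2 hglog) hsummg
        _ = (1/4:ℝ)^3 * (1 - 1/4)⁻¹ := by
            rw [tsum_mul_left, tsum_geometric_of_lt_one (by norm_num) (by norm_num)]
        _ = 1/48 := by norm_num
    have hexp2 : Real.exp (∑ i ∈ range 2, g i) = ∏ i ∈ range 2, (1 + 1 / (4:ℝ) ^ (i+1)) := by
      rw [Real.exp_sum]
      exact Finset.prod_congr rfl (fun i _ => Real.exp_log (quarter_pos i))
    have hprod2 : (∏ i ∈ range 2, (1 + 1 / (4:ℝ) ^ (i+1))) = 85/64 := by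
      rw [Finset.prod_range_succ, Finset.prod_range_one]; norm_num
    have hexp_bound : Real.exp (1/48 : ℝ) ≤ 48/47 := by
      have h := Real.add_one_le_exp (-(1/48 : ℝ))
      have hpos : (0:ℝ) < Real.exp (1/48) := Real.exp_pos _
      have : Real.exp (1/48) * (1 - 1/48) ≤ 1 := by
        have hme : Real.exp (1/48) * Real.exp (-(1/48)) = 1 := by
          rw [← Real.exp_add]; norm_num
        nlinarith
      nlinarith
    have hLsplit : (∑' n, g n) = ∑ i ∈ range 2, g i + ∑' n, g (n + 2) := hsplit2.symm
    calc (∏' n : ℕ, (1 + 1 / (4:ℝ) ^ (n+1))) = Real.exp (∑' n, g n) := hPexp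
      _ = Real.exp (∑ i ∈ range 2, g i) * Real.exp (∑' n, g (n + 2)) := by
          rw [hLsplit, Real.exp_add]
      _ ≤ (85/64) * (48/47) := by
          apply mul_le_mul
          · rw [hexp2, hprod2]
          · exact le_trans (Real.exp_le_exp.2 htail) hexp_bound
          · exact (Real.exp_pos _).le
          · norm_num
      _ < 15/11 := by norm_num
end

section
/- For all nonnegative integers k and n, S_{n+2,k+1} = S_{n+1,k} + S_{n,k}, where S_{n,k} = ∑_{j=0}^{k} C(k,j) q(n−k−j). -/
/-- `q' m` is the number of partitions of `m` into odd parts, extended by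
`q' m = 0` for `m < 0` (and `q' 0 = 1`). -/
def q' (m : ℤ) : ℕ := if 0 ≤ m then (Nat.Partition.odds m.toNat).card else 0

/-- `S n k = ∑_{j=0}^{k} C(k,j) q(n-k-j)`. -/
def S (n : ℤ) (k : ℕ) : ℕ := ∑ j ∈ Finset.range (k + 1), k.choose j * q' (n - k - j)

theorem S_recurrence (k n : ℕ) :
    S ((n : ℤ) + 2) (k + 1) = S ((n : ℤ) + 1) k + S (n : ℤ) k := by
  unfold S
  rw [Finset.sum_range_succ'
    (fun j : ℕ => (k+1).choose j * q' ((n : ℤ) + 2 - ((k:ℕ)+1 : ℕ) - j))]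
  have h1 : ∀ i ∈ Finset.range (k+1),
      (k+1).choose (i+1) * q' ((n : ℤ) + 2 - ((k:ℕ)+1 : ℕ) - ((i+1 : ℕ) : ℤ))
      = k.choose (i+1) * q' ((n : ℤ) + 1 - k - ((i+1 : ℕ) : ℤ))
        + k.choose i * q' ((n : ℤ) - k - i) := by
    intro i _
    have e1 : (n : ℤ) + 2 - ((k:ℕ)+1 : ℕ) - ((i+1 : ℕ) : ℤ) = (n : ℤ) - k - i := by
      push_cast; ring
    have e2 : (n : ℤ) + 1 - k - ((i+1 : ℕ) : ℤ) = (n : ℤ) - k - i := by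
      push_cast; ring
    rw [e1, e2, Nat.choose_succ_succ, add_mul, add_comm]
  rw [Finset.sum_congr rfl h1, Finset.sum_add_distrib]
  have h2 : ∑ i ∈ Finset.range (k+1), k.choose (i+1) * q' ((n : ℤ) + 1 - k - ((i+1 : ℕ) : ℤ))
      = ∑ i ∈ Finset.range k, k.choose (i+1) * q' ((n : ℤ) + 1 - k - ((i+1 : ℕ) : ℤ)) := by
    rw [Finset.sum_range_succ, Nat.choose_succ_self, zero_mul, add_zero]
  rw [h2]
  have h3 : ∑ j ∈ Finset.range (k+1), k.choose j * q' ((n : ℤ) + 1 - k - j)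
      = ∑ i ∈ Finset.range k, k.choose (i+1) * q' ((n : ℤ) + 1 - k - ((i+1 : ℕ) : ℤ))
        + k.choose 0 * q' ((n : ℤ) + 1 - k - ((0:ℕ) : ℤ)) :=
    Finset.sum_range_succ' _ _
  rw [h3]
  have e0 : (n : ℤ) + 2 - ((k:ℕ)+1 : ℕ) - ((0:ℕ) : ℤ) = (n : ℤ) + 1 - k - ((0:ℕ) : ℤ) := by
    push_cast; ring
  rw [e0]
  simp [add_assoc, add_comm, add_left_comm]
end
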